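/- arXiv:1407.1473 — 4 statements merged into one kernel-verified Lean document; each statement's English description precedes it below -/
import Mathlib

section
/- Let S be a distributive inverse monoid and let a, b, c ∈ S. Suppose that the join a ∨ b exists and that the meet c ∧ (a ∨ b) exists. Then the meets c ∧ a and c ∧ b both exist, the join (c ∧ a) ∨ (c ∧ b) exists, and c ∧ (a ∨ b) = (c ∧ a) ∨ (c ∧ b). -/
universe u

/-- An inverse monoid with zero: every element `a` has a unique generalized
inverse `a⁻¹`, and `0` is an absorbing element. -/
class InverseMonoidWithZero (S : Type u) extends Monoid S, Zero S, Inv S where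
  zero_mul' : ∀ a : S, 0 * a = 0
  mul_zero' : ∀ a : S, a * 0 = 0
  mul_inv_mul : ∀ a : S, a * a⁻¹ * a = a
  inv_mul_inv : ∀ a : S, a⁻¹ * a * a⁻¹ = a⁻¹
  inv_unique : ∀ a b : S, a * b * a = a → b * a * b = b → b = a⁻¹

section BasicDefs

variable {S : Type u}

/-- The natural partial order: `a ≤ b` iff `a = e * b` for some idempotent `e`. -/
def nle [InverseMonoidWithZero S] (a b : S) : Prop :=
  ∃ e : S, e * e = e ∧ a = e * b

/-- `a` and `b` are compatible if `a * b⁻¹` and `a⁻¹ * b` are idempotents. -/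
def Compat [InverseMonoidWithZero S] (a b : S) : Prop :=
  (a * b⁻¹) * (a * b⁻¹) = a * b⁻¹ ∧ (a⁻¹ * b) * (a⁻¹ * b) = a⁻¹ * b

/-- `a` and `b` are orthogonal if `a * b⁻¹ = 0` and `a⁻¹ * b = 0`. -/
def Orth [InverseMonoidWithZero S] (a b : S) : Prop :=
  a * b⁻¹ = 0 ∧ a⁻¹ * b = 0

end BasicDefs

/-- A distributive inverse monoid: every compatible pair has a join (for the
natural partial order), recorded by `sup`, and multiplication distributes over
these binary joins. -/
class DistributiveInverseMonoid (S : Type u) extends InverseMonoidWithZero S where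
  sup : S → S → S
  le_sup_left : ∀ a b : S, Compat a b → nle a (sup a b)
  le_sup_right : ∀ a b : S, Compat a b → nle b (sup a b)
  sup_le : ∀ a b c : S, Compat a b → nle a c → nle b c → nle (sup a b) c
  mul_sup : ∀ a b c : S, Compat a b → c * sup a b = sup (c * a) (c * b)
  sup_mul : ∀ a b c : S, Compat a b → sup a b * c = sup (a * c) (b * c)

/-- A Boolean inverse monoid: a distributive inverse monoid whose idempotents
form a Boolean algebra under the natural partial order; `compl` records the
complementation on idempotents. -/
class BooleanInverseMonoid (S : Type u) extends DistributiveInverseMonoid S where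
  compl : S → S
  compl_idem : ∀ e : S, e * e = e → compl e * compl e = compl e
  mul_compl : ∀ e : S, e * e = e → e * compl e = 0
  sup_compl : ∀ e : S, e * e = e → sup e (compl e) = 1

/-- A Boolean inverse ∧-monoid: a Boolean inverse monoid in which every pair of
elements has a meet with respect to the natural partial order. -/
class BooleanInverseMeetMonoid (S : Type u) extends BooleanInverseMonoid S where
  inf : S → S → S
  inf_le_left : ∀ a b : S, nle (inf a b) a
  inf_le_right : ∀ a b : S, nle (inf a b) b
  le_inf : ∀ a b c : S, nle c a → nle c b → nle c (inf a b)

section MoreDefs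

variable {S : Type u}

/-- The join of a compatible pair. -/
def bsup [DistributiveInverseMonoid S] (a b : S) : S := DistributiveInverseMonoid.sup a b

/-- Complementation in the Boolean algebra of idempotents. -/
def bcompl [BooleanInverseMonoid S] (e : S) : S := BooleanInverseMonoid.compl e

/-- The binary meet. -/
def binf [BooleanInverseMeetMonoid S] (a b : S) : S := BooleanInverseMeetMonoid.inf a b

/-- The fixed-point operator `φ(s) = s ∧ 1`. -/
def phi [BooleanInverseMeetMonoid S] (s : S) : S := binf s 1

/-- The support operator `σ(s) = \overline{φ(s)} ⋅ s⁻¹ s`. -/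
def sigma [BooleanInverseMeetMonoid S] (s : S) : S := bcompl (phi s) * (s⁻¹ * s)

/-- An infinitesimal is a non-zero element that squares to zero. -/
def Infinitesimal [InverseMonoidWithZero S] (a : S) : Prop := a ≠ 0 ∧ a * a = 0

/-- A (two-sided) ideal. -/
def IsMIdeal [InverseMonoidWithZero S] (I : Set S) : Prop :=
  I.Nonempty ∧ ∀ a ∈ I, ∀ s : S, s * a ∈ I ∧ a * s ∈ I

/-- A ∨-ideal: an ideal closed under joins of compatible pairs. -/
def IsVIdeal [DistributiveInverseMonoid S] (I : Set S) : Prop :=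
  IsMIdeal I ∧ ∀ a ∈ I, ∀ b ∈ I, Compat a b → bsup a b ∈ I

end MoreDefs

/-- 0-simplifying: the only ∨-ideals are `{0}` and `S`. -/
def ZeroSimplifying (S : Type u) [DistributiveInverseMonoid S] : Prop :=
  ∀ I : Set S, IsVIdeal I → I = {0} ∨ I = Set.univ

/-- 0-simple: non-trivial and the only ideals are `{0}` and `S`. -/
def ZeroSimple (S : Type u) [InverseMonoidWithZero S] : Prop :=
  (∃ s : S, s ≠ 0) ∧ ∀ I : Set S, IsMIdeal I → I = {0} ∨ I = Set.univ

/-- Fundamental: every element commuting with all idempotents is an idempotent. -/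
def Fundamental (S : Type u) [InverseMonoidWithZero S] : Prop :=
  ∀ a : S, (∀ e : S, e * e = e → a * e = e * a) → a * a = a

/-- The Boolean algebra of idempotents is atomless. -/
def IdemAtomless (S : Type u) [InverseMonoidWithZero S] : Prop :=
  ∀ e : S, e * e = e → e ≠ 0 → ∃ f : S, f * f = f ∧ f ≠ 0 ∧ nle f e ∧ f ≠ e

section Filters

variable {S : Type u}

/-- A filter in a Boolean inverse ∧-monoid: a nonempty subset closed under
binary meets and upward closed in the natural partial order. -/
def IsMFilter [BooleanInverseMeetMonoid S] (A : Set S) : Prop :=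
  A.Nonempty ∧ (∀ a ∈ A, ∀ b ∈ A, binf a b ∈ A) ∧ ∀ a ∈ A, ∀ b : S, nle a b → b ∈ A

/-- An ultrafilter: a maximal proper filter. -/
def IsMUltrafilter [BooleanInverseMeetMonoid S] (A : Set S) : Prop :=
  IsMFilter A ∧ (0 : S) ∉ A ∧ ∀ B : Set S, IsMFilter B → (0 : S) ∉ B → A ⊆ B → A = B

/-- A filter of the Boolean algebra of idempotents (meet of idempotents is
their product). -/
def IsIdemFilter [InverseMonoidWithZero S] (F : Set S) : Prop :=
  F.Nonempty ∧ (∀ e ∈ F, e * e = e) ∧ (∀ e ∈ F, ∀ f ∈ F, e * f ∈ F) ∧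
    ∀ e ∈ F, ∀ f : S, f * f = f → nle e f → f ∈ F

/-- An ultrafilter of the Boolean algebra of idempotents. -/
def IsIdemUltrafilter [InverseMonoidWithZero S] (F : Set S) : Prop :=
  IsIdemFilter F ∧ (0 : S) ∉ F ∧
    ∀ G : Set S, IsIdemFilter G → (0 : S) ∉ G → F ⊆ G → F = G

end Filters

section PencilDefs

variable {S : Type u}

/-- `Preceq e f`: there is a pencil from `e` to `f`, i.e. finitely many
elements `x₁, …, xₘ` with `r(xᵢ) ≤ f` for all `i` and `e = ⋁ d(xᵢ)`
(a least upper bound for the natural partial order). -/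
def Preceq [DistributiveInverseMonoid S] (e f : S) : Prop :=
  ∃ l : List S, l ≠ [] ∧ (∀ x ∈ l, nle (x * x⁻¹) f) ∧
    (∀ x ∈ l, nle (x⁻¹ * x) e) ∧ ∀ c : S, (∀ x ∈ l, nle (x⁻¹ * x) c) → nle e c

/-- Piecewise factorizable: every element is a finite join of elements each of
which lies beneath a unit. -/
def PiecewiseFactorizable (S : Type u) [DistributiveInverseMonoid S] : Prop :=
  ∀ s : S, ∃ l : List S, l ≠ [] ∧ (∀ x ∈ l, ∃ g : S, IsUnit g ∧ nle x g) ∧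
    (∀ x ∈ l, nle x s) ∧ ∀ c : S, (∀ x ∈ l, nle x c) → nle s c

/-- A properly infinite idempotent. -/
def ProperlyInfinite [DistributiveInverseMonoid S] (e : S) : Prop :=
  ∃ x y : S, x⁻¹ * x = e ∧ y⁻¹ * y = e ∧ Orth (x * x⁻¹) (y * y⁻¹) ∧
    nle (bsup (x * x⁻¹) (y * y⁻¹)) e

end PencilDefs

/-- Purely infinite: every non-zero idempotent is properly infinite. -/
def PurelyInfinite (S : Type u) [DistributiveInverseMonoid S] : Prop :=
  ∀ e : S, e * e = e → e ≠ 0 → ProperlyInfinite e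

section Aux

variable {S : Type u} [InverseMonoidWithZero S]

open InverseMonoidWithZero

lemma aux_inv_inv (a : S) : (a⁻¹)⁻¹ = a :=
  (inv_unique a⁻¹ a (inv_mul_inv a) (mul_inv_mul a)).symm

lemma aux_idem_inv {e : S} (he : e * e = e) : e⁻¹ = e := by
  have := inv_unique e e (by rw [he, he]) (by rw [he, he])
  exact this.symm

lemma aux_dd_idem (a : S) : (a * a⁻¹) * (a * a⁻¹) = a * a⁻¹ := by
  calc (a * a⁻¹) * (a * a⁻¹) = (a * a⁻¹ * a) * a⁻¹ := by simp only [mul_assoc]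
  _ = a * a⁻¹ := by rw [mul_inv_mul]

lemma aux_rr_idem (a : S) : (a⁻¹ * a) * (a⁻¹ * a) = a⁻¹ * a := by
  calc (a⁻¹ * a) * (a⁻¹ * a) = (a⁻¹ * a * a⁻¹) * a := by simp only [mul_assoc]
  _ = a⁻¹ * a := by rw [inv_mul_inv]

lemma aux_mul_idem {e f : S} (he : e * e = e) (hf : f * f = f) :
    (e * f) * (e * f) = e * f := by
  set x := (e * f)⁻¹ with hxdef
  have h1 : (e * f) * x * (e * f) = e * f := mul_inv_mul (e * f)
  have h2 : x * (e * f) * x = x := inv_mul_inv (e * f)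
  have hx : f * x * e = x := by
    apply InverseMonoidWithZero.inv_unique (e * f) (f * x * e)
    · calc (e * f) * (f * x * e) * (e * f)
          = e * (f * f) * x * (e * e) * f := by simp only [mul_assoc]
      _ = (e * f) * x * (e * f) := by rw [hf, he]; simp only [mul_assoc]
      _ = e * f := h1
    · calc (f * x * e) * (e * f) * (f * x * e)
          = f * x * (e * e) * (f * f) * x * e := by simp only [mul_assoc]
      _ = f * (x * (e * f) * x) * e := by rw [he, hf]; simp only [mul_assoc]
      _ = f * x * e := by rw [h2, mul_assoc]
  have hxx : x * x = x := by
    calc x * x = (f * x * e) * (f * x * e) := by rw [hx]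
    _ = f * (x * (e * f) * x) * e := by simp only [mul_assoc]
    _ = f * x * e := by rw [h2, mul_assoc]
    _ = x := hx
  have : e * f = x := by rw [← aux_inv_inv (e * f), ← hxdef, aux_idem_inv hxx]
  rw [this, hxx]

lemma aux_idem_comm {e f : S} (he : e * e = e) (hf : f * f = f) :
    e * f = f * e := by
  have hef := aux_mul_idem he hf
  have hfe := aux_mul_idem hf he
  have h : f * e = (e * f)⁻¹ := by
    apply InverseMonoidWithZero.inv_unique
    · calc (e * f) * (f * e) * (e * f) = e * (f * f) * (e * e) * f := by
            simp only [mul_assoc]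
      _ = (e * f) * (e * f) := by rw [hf, he]; simp only [mul_assoc]
      _ = e * f := hef
    · calc (f * e) * (e * f) * (f * e) = f * (e * e) * (f * f) * e := by
            simp only [mul_assoc]
      _ = (f * e) * (f * e) := by rw [he, hf]; simp only [mul_assoc]
      _ = f * e := hfe
  rw [h, aux_idem_inv hef]

lemma aux_mul_inv_rev (a b : S) : (a * b)⁻¹ = b⁻¹ * a⁻¹ := by
  symm
  apply InverseMonoidWithZero.inv_unique
  · calc (a * b) * (b⁻¹ * a⁻¹) * (a * b)
        = a * ((b * b⁻¹) * (a⁻¹ * a)) * b := by simp only [mul_assoc]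
    _ = a * ((a⁻¹ * a) * (b * b⁻¹)) * b := by
          rw [aux_idem_comm (aux_dd_idem b) (aux_rr_idem a)]
    _ = (a * a⁻¹ * a) * (b * b⁻¹ * b) := by simp only [mul_assoc]
    _ = a * b := by rw [mul_inv_mul, mul_inv_mul]
  · calc (b⁻¹ * a⁻¹) * (a * b) * (b⁻¹ * a⁻¹)
        = b⁻¹ * ((a⁻¹ * a) * (b * b⁻¹)) * a⁻¹ := by simp only [mul_assoc]
    _ = b⁻¹ * ((b * b⁻¹) * (a⁻¹ * a)) * a⁻¹ := by
          rw [aux_idem_comm (aux_rr_idem a) (aux_dd_idem b)]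
    _ = (b⁻¹ * b * b⁻¹) * (a⁻¹ * a * a⁻¹) := by simp only [mul_assoc]
    _ = b⁻¹ * a⁻¹ := by rw [inv_mul_inv, inv_mul_inv]

lemma aux_conj_idem {e : S} (a : S) (he : e * e = e) :
    (a⁻¹ * e * a) * (a⁻¹ * e * a) = a⁻¹ * e * a := by
  calc (a⁻¹ * e * a) * (a⁻¹ * e * a)
      = a⁻¹ * (e * (a * a⁻¹)) * (e * a) := by simp only [mul_assoc]
  _ = a⁻¹ * ((a * a⁻¹) * e) * (e * a) := by rw [aux_idem_comm he (aux_dd_idem a)]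
  _ = (a⁻¹ * a * a⁻¹) * ((e * e) * a) := by simp only [mul_assoc]
  _ = a⁻¹ * e * a := by rw [inv_mul_inv, he, mul_assoc]

lemma aux_nle_trans {x y z : S} (h1 : nle x y) (h2 : nle y z) : nle x z := by
  obtain ⟨e, he, rfl⟩ := h1
  obtain ⟨f, hf, rfl⟩ := h2
  exact ⟨e * f, aux_mul_idem he hf, by rw [mul_assoc]⟩

/-- If `x ≤ a` then `x = (x x⁻¹) a`. -/
lemma aux_nle_canon {x a : S} (h : nle x a) : x = (x * x⁻¹) * a := by
  obtain ⟨g, hg, rfl⟩ := h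
  have hginv : g⁻¹ = g := aux_idem_inv hg
  rw [aux_mul_inv_rev, hginv]
  symm
  calc g * a * (a⁻¹ * g) * a = g * ((a * a⁻¹) * g) * a := by simp only [mul_assoc]
  _ = g * (g * (a * a⁻¹)) * a := by rw [aux_idem_comm (aux_dd_idem a) hg]
  _ = (g * g) * (a * a⁻¹ * a) := by simp only [mul_assoc]
  _ = g * a := by rw [hg, mul_inv_mul]

/-- If `x ≤ a` then `x = a e` for some idempotent `e`. -/
lemma aux_nle_right {x a : S} (h : nle x a) :
    ∃ e : S, e * e = e ∧ x = a * e := by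
  obtain ⟨g, hg, rfl⟩ := h
  refine ⟨a⁻¹ * g * a, aux_conj_idem a hg, ?_⟩
  symm
  calc a * (a⁻¹ * g * a) = ((a * a⁻¹) * g) * a := by simp only [mul_assoc]
  _ = (g * (a * a⁻¹)) * a := by rw [aux_idem_comm hg (aux_dd_idem a)]
  _ = g * (a * a⁻¹ * a) := by simp only [mul_assoc]
  _ = g * a := by rw [mul_inv_mul]

lemma aux_compat_of_nle {a b x y : S} (hab : Compat a b)
    (hx : nle x a) (hy : nle y b) : Compat x y := by
  obtain ⟨hab1, hab2⟩ := hab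
  obtain ⟨e', he', hxe'⟩ := aux_nle_right hx
  obtain ⟨e, he, hxe⟩ := hx
  obtain ⟨f, hf, hyf⟩ := hy
  constructor
  · have hrw : x * y⁻¹ = e * (a * b⁻¹) * f := by
      rw [hxe, hyf, aux_mul_inv_rev, aux_idem_inv hf]
      simp only [mul_assoc]
    rw [hrw]
    exact aux_mul_idem (aux_mul_idem he hab1) hf
  · have hmid : a⁻¹ * (f * b) = (a⁻¹ * f * a) * (a⁻¹ * b) := by
      calc a⁻¹ * (f * b) = (a⁻¹ * a * a⁻¹) * (f * b) := by rw [inv_mul_inv]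
      _ = a⁻¹ * ((a * a⁻¹) * f) * b := by simp only [mul_assoc]
      _ = a⁻¹ * (f * (a * a⁻¹)) * b := by
            rw [← aux_idem_comm hf (aux_dd_idem a)]
      _ = (a⁻¹ * f * a) * (a⁻¹ * b) := by simp only [mul_assoc]
    have hrw : x⁻¹ * y = e' * ((a⁻¹ * f * a) * (a⁻¹ * b)) := by
      rw [hxe', hyf, aux_mul_inv_rev, aux_idem_inv he', mul_assoc, hmid]
    rw [hrw]
    exact aux_mul_idem he' (aux_mul_idem (aux_conj_idem _ hf) hab2)

lemma aux_key {x t : S} (e : S) (he : e * e = e) (hex : e * x = x)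
    (hxt : x = (x * x⁻¹) * t) : nle x (e * t) := by
  refine ⟨x * x⁻¹, aux_dd_idem x, ?_⟩
  calc x = e * x := hex.symm
  _ = e * ((x * x⁻¹) * t) := by rw [← hxt]
  _ = (e * (x * x⁻¹)) * t := by rw [← mul_assoc]
  _ = ((x * x⁻¹) * e) * t := by rw [aux_idem_comm he (aux_dd_idem x)]
  _ = (x * x⁻¹) * (e * t) := by simp only [mul_assoc]

end Aux

/-- In a distributive inverse monoid, if `a ∨ b` exists (i.e.
`a` and `b` are compatible) and `c ∧ (a ∨ b)` exists, then `c ∧ a` and `c ∧ b`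
exist, `(c ∧ a) ∨ (c ∧ b)` exists, and `c ∧ (a ∨ b) = (c ∧ a) ∨ (c ∧ b)`. -/
theorem statement2 {S : Type u} [DistributiveInverseMonoid S] (a b c : S)
    (hab : Compat a b) (m : S)
    (hm1 : nle m c) (hm2 : nle m (bsup a b))
    (hm3 : ∀ x : S, nle x c → nle x (bsup a b) → nle x m) :
    ∃ ma mb : S,
      (nle ma c ∧ nle ma a ∧ ∀ x : S, nle x c → nle x a → nle x ma) ∧
      (nle mb c ∧ nle mb b ∧ ∀ x : S, nle x c → nle x b → nle x mb) ∧
      Compat ma mb ∧ m = bsup ma mb := by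
  obtain ⟨e, he, hme⟩ := hm2
  refine ⟨e * a, e * b, ?_, ?_, ?_, ?_⟩
  rotate_right 2
  · -- Compat (e*a) (e*b)
    exact aux_compat_of_nle hab ⟨e, he, rfl⟩ ⟨e, he, rfl⟩
  · -- m = bsup (e*a) (e*b)
    rw [hme, bsup, bsup, DistributiveInverseMonoid.mul_sup a b e hab]
  all_goals {
    first
    | (refine ⟨?_, ⟨e, he, rfl⟩, ?_⟩
       · -- nle (e*a) c  resp. (e*b)
         have hcompat : Compat (e * a) (e * b) :=
           aux_compat_of_nle hab ⟨e, he, rfl⟩ ⟨e, he, rfl⟩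
         have hsup : m = bsup (e * a) (e * b) := by
           rw [hme, bsup, bsup, DistributiveInverseMonoid.mul_sup a b e hab]
         have h1 : nle (e * a) m := by
           rw [hsup]
           exact DistributiveInverseMonoid.le_sup_left _ _ hcompat
         have h2 : nle (e * b) m := by
           rw [hsup]
           exact DistributiveInverseMonoid.le_sup_right _ _ hcompat
         first
         | exact aux_nle_trans h1 hm1
         | exact aux_nle_trans h2 hm1
       · -- glb property
         intro x hxc hxa
         have hxab : nle x (bsup a b) := by
           refine aux_nle_trans hxa ?_
           first
           | exact DistributiveInverseMonoid.le_sup_left a b hab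
           | exact DistributiveInverseMonoid.le_sup_right a b hab
         have hxm : nle x m := hm3 x hxc hxab
         -- show nle x (e * a)  (resp. e * b)
         have hcanon : x = (x * x⁻¹) * m := aux_nle_canon hxm
         have hex : e * x = x := by
           conv_lhs => rw [hcanon, hme]
           calc e * ((x * x⁻¹) * (e * (bsup a b)))
               = (e * (x * x⁻¹)) * (e * bsup a b) := by simp only [mul_assoc]
           _ = ((x * x⁻¹) * e) * (e * bsup a b) := by
                 rw [aux_idem_comm he (aux_dd_idem x)]
           _ = (x * x⁻¹) * ((e * e) * bsup a b) := by simp only [mul_assoc]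
           _ = (x * x⁻¹) * (e * bsup a b) := by rw [he]
           _ = x := by rw [← hme, ← hcanon]
         exact aux_key e he hex (aux_nle_canon hxa)) }
end

section
/- Let S be a Boolean inverse ∧-monoid. The relation ≡ is the universal relation on the set of non-zero idempotents of S if, and only if, S is 0-simplifying. -/
universe u

namespace St3Aux

variable {S : Type u} [InverseMonoidWithZero S]

lemma zmul (a : S) : 0 * a = 0 := InverseMonoidWithZero.zero_mul' a
lemma mulz (a : S) : a * 0 = 0 := InverseMonoidWithZero.mul_zero' a
lemma mii (a : S) : a * a⁻¹ * a = a := InverseMonoidWithZero.mul_inv_mul a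
lemma imi (a : S) : a⁻¹ * a * a⁻¹ = a⁻¹ := InverseMonoidWithZero.inv_mul_inv a
lemma inv_uniq {a b : S} (h1 : a * b * a = a) (h2 : b * a * b = b) : b = a⁻¹ :=
  InverseMonoidWithZero.inv_unique a b h1 h2

lemma inv_invS (a : S) : a⁻¹⁻¹ = a := (inv_uniq (imi a) (mii a)).symm

lemma idem_inv {e : S} (he : e * e = e) : e⁻¹ = e :=
  (inv_uniq (by rw [he, he]) (by rw [he, he])).symm

lemma zero_inv : (0 : S)⁻¹ = 0 := idem_inv (mulz 0)

lemma idem_dd (a : S) : (a * a⁻¹) * (a * a⁻¹) = a * a⁻¹ := by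
  rw [← mul_assoc, mii]

lemma idem_di (a : S) : (a⁻¹ * a) * (a⁻¹ * a) = a⁻¹ * a := by
  rw [← mul_assoc, imi]

lemma idem_mul_idem {e f : S} (he : e * e = e) (hf : f * f = f) :
    (e * f) * (e * f) = e * f := by
  set x := (e * f)⁻¹ with hx
  have h1 : (e * f) * (f * x * e) * (e * f) = e * f := by
    have : (e * f) * (f * x * e) * (e * f) = e * ((f * f) * x * (e * e)) * f := by
      simp only [mul_assoc]
    rw [this, he, hf]
    have : e * (f * x * e) * f = (e * f) * x * (e * f) := by simp only [mul_assoc]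
    rw [this, hx, mii]
  have h2 : (f * x * e) * (e * f) * (f * x * e) = f * x * e := by
    have : (f * x * e) * (e * f) * (f * x * e) = f * (x * ((e * e) * (f * f)) * x) * e := by
      simp only [mul_assoc]
    rw [this, he, hf]
    have : f * (x * (e * f) * x) * e = f * ((e*f)⁻¹ * (e*f) * (e*f)⁻¹) * e := by
      rw [hx]
    rw [this, imi]
  have hfeq : f * x * e = x := inv_uniq h1 h2
  have hxx : x * x = x := by
    conv_lhs => rw [← hfeq]
    have : (f * x * e) * (f * x * e) = f * (x * (e * f) * x) * e := by
      simp only [mul_assoc]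
    rw [this]
    have : x * (e * f) * x = x := by rw [hx]; exact imi (e*f)
    rw [this, hfeq]
  have : e * f = x⁻¹ := by rw [hx, inv_invS]
  rw [this, idem_inv hxx]; exact hxx

lemma idem_comm {e f : S} (he : e * e = e) (hf : f * f = f) : e * f = f * e := by
  have hef := idem_mul_idem he hf
  have hfe := idem_mul_idem hf he
  have h1 : (e * f) * (f * e) * (e * f) = e * f := by
    have : (e * f) * (f * e) * (e * f) = e * ((f * f) * (e * e)) * f := by
      simp only [mul_assoc]
    rw [this, he, hf]
    have : e * (f * e) * f = (e * f) * (e * f) := by simp only [mul_assoc]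
    rw [this, hef]
  have h2 : (f * e) * (e * f) * (f * e) = f * e := by
    have : (f * e) * (e * f) * (f * e) = f * ((e * e) * (f * f)) * e := by
      simp only [mul_assoc]
    rw [this, he, hf]
    have : f * (e * f) * e = (f * e) * (f * e) := by simp only [mul_assoc]
    rw [this, hfe]
  have := inv_uniq h1 h2
  rw [this, idem_inv hef]

lemma mul_inv_rev' (a b : S) : (a * b)⁻¹ = b⁻¹ * a⁻¹ := by
  symm
  apply inv_uniq
  · have : (a * b) * (b⁻¹ * a⁻¹) * (a * b) = a * ((b * b⁻¹) * ((a⁻¹ * a) * b)) := by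
      simp only [mul_assoc]
    rw [this, ← mul_assoc (b*b⁻¹), idem_comm (idem_dd b) (idem_di a), mul_assoc (a⁻¹*a)]
    have : a * (a⁻¹ * a * (b * b⁻¹ * b)) = (a * a⁻¹ * a) * (b * b⁻¹ * b) := by
      simp only [mul_assoc]
    rw [this, mii, mii]
  · have : (b⁻¹ * a⁻¹) * (a * b) * (b⁻¹ * a⁻¹) = b⁻¹ * ((a⁻¹ * a) * ((b * b⁻¹) * a⁻¹)) := by
      simp only [mul_assoc]
    rw [this, ← mul_assoc (a⁻¹*a), idem_comm (idem_di a) (idem_dd b), mul_assoc (b*b⁻¹)]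
    have : b⁻¹ * (b * b⁻¹ * (a⁻¹ * a * a⁻¹)) = (b⁻¹ * b * b⁻¹) * (a⁻¹ * a * a⁻¹) := by
      simp only [mul_assoc]
    rw [this, imi, imi]

lemma nle_refl (a : S) : nle a a := ⟨a * a⁻¹, idem_dd a, (mii a).symm⟩

lemma nle_zero (a : S) : nle (0 : S) a := ⟨0, mulz 0, (zmul a).symm⟩

lemma nle_trans {a b c : S} (h1 : nle a b) (h2 : nle b c) : nle a c := by
  obtain ⟨e, he, hab⟩ := h1
  obtain ⟨f, hf, hbc⟩ := h2
  exact ⟨e * f, idem_mul_idem he hf, by rw [hab, hbc, mul_assoc]⟩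

lemma nle_def {a b : S} (h : nle a b) : a * a⁻¹ * b = a := by
  obtain ⟨e, he, hab⟩ := h
  have hinv : (e * b)⁻¹ = b⁻¹ * e := by rw [mul_inv_rev', idem_inv he]
  rw [hab, hinv]
  have h1 : e * b * (b⁻¹ * e) * b = e * ((b * b⁻¹) * (e * b)) := by
    simp only [mul_assoc]
  rw [h1, ← mul_assoc (b * b⁻¹), idem_comm (idem_dd b) he]
  have h2 : e * (e * (b * b⁻¹) * b) = (e * e) * (b * b⁻¹ * b) := by
    simp only [mul_assoc]
  rw [h2, he, mii]

lemma nle_antisymm {a b : S} (h1 : nle a b) (h2 : nle b a) : a = b := by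
  obtain ⟨e, he, hab⟩ := h1
  obtain ⟨f, hf, hba⟩ := h2
  have hafa : a = e * (f * a) := by rw [← hba, ← hab]
  have key : f * (e * (f * a)) = e * (f * a) := by
    have h1 : f * (e * (f * a)) = (f * e) * (f * a) := by simp only [mul_assoc]
    rw [h1, idem_comm hf he]
    have h2 : (e * f) * (f * a) = e * ((f * f) * a) := by simp only [mul_assoc]
    rw [h2, hf]
  have hba2 : b = a := by
    calc b = f * a := hba
      _ = f * (e * (f * a)) := by conv_lhs => rw [hafa]
      _ = e * (f * a) := key
      _ = a := hafa.symm
  exact hba2.symm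

lemma nle_mul_right {a b : S} (c : S) (h : nle a b) : nle (a * c) (b * c) := by
  obtain ⟨e, he, hab⟩ := h
  exact ⟨e, he, by rw [hab, mul_assoc]⟩

lemma conj_idem {e : S} (c : S) (he : e * e = e) :
    (c * e * c⁻¹) * (c * e * c⁻¹) = c * e * c⁻¹ := by
  have : (c * e * c⁻¹) * (c * e * c⁻¹) = c * (e * ((c⁻¹ * c) * (e * c⁻¹))) := by
    simp only [mul_assoc]
  rw [this, ← mul_assoc (c⁻¹ * c), idem_comm (idem_di c) he, mul_assoc e]
  have : c * (e * (e * (c⁻¹ * c * c⁻¹))) = c * ((e * e) * (c⁻¹ * c * c⁻¹)) := by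
    simp only [mul_assoc]
  rw [this, he, imi, ← mul_assoc]

lemma nle_mul_left {a b : S} (c : S) (h : nle a b) : nle (c * a) (c * b) := by
  obtain ⟨e, he, hab⟩ := h
  refine ⟨c * e * c⁻¹, conj_idem c he, ?_⟩
  have : c * e * c⁻¹ * (c * b) = c * (e * ((c⁻¹ * c) * b)) := by simp only [mul_assoc]
  rw [this, ← mul_assoc e, idem_comm he (idem_di c), mul_assoc (c⁻¹ * c),
    ← mul_assoc, ← mul_assoc c c⁻¹ c, mii, hab, ← mul_assoc]

lemma nle_conj_dd {e : S} (c : S) (he : e * e = e) : nle (c * e * c⁻¹) (c * c⁻¹) := by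
  refine ⟨c * e * c⁻¹, conj_idem c he, ?_⟩
  have : c * e * c⁻¹ * (c * c⁻¹) = c * (e * ((c⁻¹ * c) * c⁻¹)) := by simp only [mul_assoc]
  rw [this, ← mul_assoc e, idem_comm he (idem_di c), mul_assoc (c⁻¹ * c),
    ← mul_assoc, ← mul_assoc c c⁻¹ c, mii, mul_assoc]

lemma idem_nle_one {e : S} (he : e * e = e) : nle e 1 := ⟨e, he, (mul_one e).symm⟩

lemma nle_one_idem {a : S} (h : nle a 1) : a * a = a := by
  obtain ⟨e, he, hab⟩ := h
  rw [mul_one] at hab; rw [hab]; exact he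

lemma idem_of_nle_idem {a e : S} (he : e * e = e) (h : nle a e) : a * a = a := by
  obtain ⟨g, hg, hab⟩ := h
  rw [hab]
  have : g * e * (g * e) = g * (e * g) * e := by simp only [mul_assoc]
  rw [this, ← idem_comm hg he]
  have : g * (g * e) * e = (g * g) * (e * e) := by simp only [mul_assoc]
  rw [this, hg, he]

lemma compat_idem {e f : S} (he : e * e = e) (hf : f * f = f) : Compat e f := by
  constructor
  · rw [idem_inv hf]; exact idem_mul_idem he hf
  · rw [idem_inv he]; exact idem_mul_idem he hf

lemma compat_zero (a : S) : Compat a (0 : S) := by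
  constructor
  · rw [zero_inv, mulz, mulz]
  · rw [mulz, mulz]

section Dist

variable {S : Type u} [DistributiveInverseMonoid S]

lemma le_bsup_left {a b : S} (h : Compat a b) : nle a (bsup a b) :=
  DistributiveInverseMonoid.le_sup_left a b h

lemma le_bsup_right {a b : S} (h : Compat a b) : nle b (bsup a b) :=
  DistributiveInverseMonoid.le_sup_right a b h

lemma bsup_le {a b c : S} (h : Compat a b) (h1 : nle a c) (h2 : nle b c) :
    nle (bsup a b) c :=
  DistributiveInverseMonoid.sup_le a b c h h1 h2

lemma bsup_idem {e f : S} (he : e * e = e) (hf : f * f = f) :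
    bsup e f * bsup e f = bsup e f :=
  nle_one_idem (bsup_le (compat_idem he hf) (idem_nle_one he) (idem_nle_one hf))

/-- Iterated join of a list, with `0` as the empty join. -/
def foldj (l : List S) : S := l.foldr bsup 0

@[simp] lemma foldj_nil : foldj ([] : List S) = 0 := rfl

@[simp] lemma foldj_cons (x : S) (l : List S) : foldj (x :: l) = bsup x (foldj l) := rfl

lemma fold_idem {l : List S} (hl : ∀ x ∈ l, x * x = x) : foldj l * foldj l = foldj l := by
  induction l with
  | nil => simpa using mulz (0 : S)
  | cons x t ih =>
    simp only [foldj_cons]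
    exact bsup_idem (hl x (List.mem_cons_self)) (ih fun y hy => hl y (List.mem_cons_of_mem x hy))

lemma fold_ub {l : List S} (hl : ∀ x ∈ l, x * x = x) : ∀ x ∈ l, nle x (foldj l) := by
  induction l with
  | nil => intro x hx; simp at hx
  | cons a t ih =>
    intro x hx
    have hC : Compat a (foldj t) :=
      compat_idem (hl a (List.mem_cons_self)) (fold_idem fun y hy => hl y (List.mem_cons_of_mem a hy))
    rcases List.mem_cons.mp hx with h | h
    · subst h; exact le_bsup_left hC
    · exact nle_trans (ih (fun y hy => hl y (List.mem_cons_of_mem a hy)) x h) (le_bsup_right hC)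

lemma fold_lub {l : List S} {c : S} (hl : ∀ x ∈ l, x * x = x)
    (hc : ∀ x ∈ l, nle x c) : nle (foldj l) c := by
  induction l with
  | nil => exact nle_zero c
  | cons a t ih =>
    have hC : Compat a (foldj t) :=
      compat_idem (hl a (List.mem_cons_self)) (fold_idem fun y hy => hl y (List.mem_cons_of_mem a hy))
    exact bsup_le hC (hc a (List.mem_cons_self))
      (ih (fun y hy => hl y (List.mem_cons_of_mem a hy)) (fun y hy => hc y (List.mem_cons_of_mem a hy)))

lemma fold_eq_of_lub {l : List S} {e : S} (hl : ∀ x ∈ l, x * x = x)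
    (hub : ∀ x ∈ l, nle x e) (hlub : ∀ c : S, (∀ x ∈ l, nle x c) → nle e c) :
    e = foldj l :=
  nle_antisymm (hlub (foldj l) (fold_ub hl)) (fold_lub hl hub)

lemma compat_mul_idem {g F : S} (c : S) (hg : g * g = g) (hF : F * F = F) :
    Compat (c * g) (c * F) := by
  constructor
  · have h1 : (c * F)⁻¹ = F * c⁻¹ := by rw [mul_inv_rev', idem_inv hF]
    rw [h1]
    have h2 : c * g * (F * c⁻¹) = c * (g * F) * c⁻¹ := by simp only [mul_assoc]
    rw [h2]
    exact conj_idem c (idem_mul_idem hg hF)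
  · have h1 : (c * g)⁻¹ = g * c⁻¹ := by rw [mul_inv_rev', idem_inv hg]
    rw [h1]
    have h2 : g * c⁻¹ * (c * F) = g * ((c⁻¹ * c) * F) := by simp only [mul_assoc]
    rw [h2, ← mul_assoc g]
    exact idem_mul_idem (idem_mul_idem hg (idem_di c)) hF

lemma fold_conj {l : List S} (c : S) (hl : ∀ x ∈ l, x * x = x) :
    foldj (l.map (fun g => c * g * c⁻¹)) = c * foldj l * c⁻¹ := by
  induction l with
  | nil => simp [mulz, zmul]
  | cons a t ih =>
    have ha := hl a (List.mem_cons_self)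
    have ht : ∀ y ∈ t, y * y = y := fun y hy => hl y (List.mem_cons_of_mem a hy)
    have hFt : foldj t * foldj t = foldj t := fold_idem ht
    have hC : Compat a (foldj t) := compat_idem ha hFt
    simp only [List.map_cons, foldj_cons, ih ht, bsup]
    rw [DistributiveInverseMonoid.mul_sup a (foldj t) c hC,
      DistributiveInverseMonoid.sup_mul (c * a) (c * foldj t) c⁻¹ (compat_mul_idem c ha hFt)]

end Dist

section Preceq

variable {S : Type u} [DistributiveInverseMonoid S]

lemma dxg {x g : S} (hg : g * g = g) : (x * g)⁻¹ * (x * g) = (x⁻¹ * x) * g := by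
  rw [mul_inv_rev', idem_inv hg]
  have h1 : g * x⁻¹ * (x * g) = g * ((x⁻¹ * x) * g) := by simp only [mul_assoc]
  rw [h1, ← mul_assoc, idem_comm hg (idem_di x), mul_assoc, hg]

lemma dconj (s t : S) : (s * t)⁻¹ * (s * t) = t⁻¹ * (s⁻¹ * s) * t := by
  rw [mul_inv_rev']; simp only [mul_assoc]

lemma rconj (x t : S) : (x * t) * (x * t)⁻¹ = x * (t * t⁻¹) * x⁻¹ := by
  rw [mul_inv_rev']; simp only [mul_assoc]

lemma idem_conj_inv {y : S} (t : S) (hy : y * y = y) :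
    (t⁻¹ * y * t) * (t⁻¹ * y * t) = t⁻¹ * y * t := by
  have := conj_idem (c := t⁻¹) hy
  rwa [inv_invS] at this

lemma preceq_zero (f : S) : Preceq (0 : S) f := by
  refine ⟨[0], by simp, ?_, ?_, ?_⟩
  · intro x hx
    rw [List.mem_singleton] at hx; subst hx
    rw [zero_inv, mulz]; exact nle_zero f
  · intro x hx
    rw [List.mem_singleton] at hx; subst hx
    rw [zero_inv, mulz]; exact nle_zero 0
  · intro c _; exact nle_zero c

lemma preceq_idem_self {f : S} (hf : f * f = f) : Preceq f f := by
  refine ⟨[f], by simp, ?_, ?_, ?_⟩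
  · intro x hx
    rw [List.mem_singleton] at hx; rw [hx, idem_inv hf, hf]; exact nle_refl f
  · intro x hx
    rw [List.mem_singleton] at hx; rw [hx, idem_inv hf, hf]; exact nle_refl f
  · intro c hc
    have := hc f (List.mem_singleton_self f)
    rwa [idem_inv hf, hf] at this

lemma preceq_down {g e f : S} (hg : g * g = g) (he : e * e = e) (hge : nle g e)
    (h : Preceq e f) : Preceq g f := by
  obtain ⟨l, hne, hr, hd, hlub⟩ := h
  set m := l.map (fun x => x⁻¹ * x) with hm_def
  have hm : ∀ y ∈ m, y * y = y := by
    intro y hy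
    obtain ⟨x, _, rfl⟩ := List.mem_map.mp hy
    exact idem_di x
  have hub : ∀ y ∈ m, nle y e := by
    intro y hy
    obtain ⟨x, hx, rfl⟩ := List.mem_map.mp hy
    exact hd x hx
  have hefold : e = foldj m :=
    fold_eq_of_lub hm hub (fun c hc => hlub c (fun x hx => hc (x⁻¹ * x) (List.mem_map_of_mem hx)))
  have heg : e * g = g := by
    have h1 := nle_def hge
    rw [idem_inv hg, hg] at h1
    rw [idem_comm he hg]; exact h1
  have hmap : m.map (fun y => y * g) = m.map (fun y => g * y * g⁻¹) := by
    refine List.map_congr_left ?_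
    intro y hy
    have hy' := hm y hy
    rw [idem_inv hg, idem_comm hg hy', mul_assoc, hg]
  have hFm : foldj m * foldj m = foldj m := fold_idem hm
  have gfold : g = foldj (m.map (fun y => y * g)) := by
    rw [hmap, fold_conj g hm, idem_inv hg, idem_comm hg hFm, mul_assoc, hg, ← hefold, heg]
  refine ⟨l.map (fun x => x * g), fun hnil => hne (List.map_eq_nil_iff.mp hnil), ?_, ?_, ?_⟩
  · intro y hy
    obtain ⟨x, hx, rfl⟩ := List.mem_map.mp hy
    have h1 : x * g * (x * g)⁻¹ = x * g * x⁻¹ := by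
      rw [mul_inv_rev', idem_inv hg]
      have h2 : x * g * (g * x⁻¹) = x * (g * g) * x⁻¹ := by simp only [mul_assoc]
      rw [h2, hg]
    rw [h1]
    exact nle_trans (nle_conj_dd x hg) (hr x hx)
  · intro y hy
    obtain ⟨x, hx, rfl⟩ := List.mem_map.mp hy
    rw [dxg hg]
    exact ⟨x⁻¹ * x, idem_di x, rfl⟩
  · intro c hc
    rw [gfold]
    refine fold_lub ?_ ?_
    · intro y hy
      obtain ⟨z, hz, rfl⟩ := List.mem_map.mp hy
      exact idem_mul_idem (hm z hz) hg
    · intro y hy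
      obtain ⟨z, hz, rfl⟩ := List.mem_map.mp hy
      obtain ⟨x, hx, rfl⟩ := List.mem_map.mp hz
      have := hc (x * g) (List.mem_map_of_mem hx)
      rwa [dxg hg] at this

lemma preceq_mul_right {s t f : S} (h : Preceq (s⁻¹ * s) f) :
    Preceq ((s * t)⁻¹ * (s * t)) f := by
  obtain ⟨l, hne, hr, hd, hlub⟩ := h
  set m := l.map (fun x => x⁻¹ * x) with hm_def
  have hm : ∀ y ∈ m, y * y = y := by
    intro y hy
    obtain ⟨x, _, rfl⟩ := List.mem_map.mp hy
    exact idem_di x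
  have hub : ∀ y ∈ m, nle y (s⁻¹ * s) := by
    intro y hy
    obtain ⟨x, hx, rfl⟩ := List.mem_map.mp hy
    exact hd x hx
  have hefold : s⁻¹ * s = foldj m :=
    fold_eq_of_lub hm hub (fun c hc => hlub c (fun x hx => hc (x⁻¹ * x) (List.mem_map_of_mem hx)))
  have hconj : foldj (m.map (fun y => t⁻¹ * y * t)) = t⁻¹ * foldj m * t := by
    have h1 := fold_conj (c := t⁻¹) hm
    simpa only [inv_invS] using h1
  have hdst : (s * t)⁻¹ * (s * t) = foldj (m.map (fun y => t⁻¹ * y * t)) := by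
    rw [dconj, hefold, hconj]
  have hmidem : ∀ y ∈ m.map (fun y => t⁻¹ * y * t), y * y = y := by
    intro y hy
    obtain ⟨z, hz, rfl⟩ := List.mem_map.mp hy
    exact idem_conj_inv t (hm z hz)
  rw [hdst]
  refine ⟨l.map (fun x => x * t), fun hnil => hne (List.map_eq_nil_iff.mp hnil), ?_, ?_, ?_⟩
  · intro y hy
    obtain ⟨x, hx, rfl⟩ := List.mem_map.mp hy
    rw [rconj]
    exact nle_trans (nle_conj_dd x (idem_dd t)) (hr x hx)
  · intro y hy
    obtain ⟨x, hx, rfl⟩ := List.mem_map.mp hy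
    rw [dconj]
    refine fold_ub hmidem _ ?_
    exact List.mem_map.mpr ⟨x⁻¹ * x, List.mem_map_of_mem hx, rfl⟩
  · intro c hc
    refine fold_lub hmidem ?_
    intro y hy
    obtain ⟨z, hz, rfl⟩ := List.mem_map.mp hy
    obtain ⟨x, hx, rfl⟩ := List.mem_map.mp hz
    have := hc (x * t) (List.mem_map_of_mem hx)
    rwa [dconj] at this

lemma preceq_sup {e e' f : S} (he : e * e = e) (he' : e' * e' = e')
    (h : Preceq e f) (h' : Preceq e' f) : Preceq (bsup e e') f := by
  obtain ⟨l, hne, hr, hd, hlub⟩ := h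
  obtain ⟨l', hne', hr', hd', hlub'⟩ := h'
  have hC : Compat e e' := compat_idem he he'
  refine ⟨l ++ l', by simp [hne], ?_, ?_, ?_⟩
  · intro x hx
    rcases List.mem_append.mp hx with h1 | h1
    · exact hr x h1
    · exact hr' x h1
  · intro x hx
    rcases List.mem_append.mp hx with h1 | h1
    · exact nle_trans (hd x h1) (le_bsup_left hC)
    · exact nle_trans (hd' x h1) (le_bsup_right hC)
  · intro c hc
    refine bsup_le hC ?_ ?_
    · exact hlub c (fun x hx => hc x (List.mem_append.mpr (Or.inl hx)))
    · exact hlub' c (fun x hx => hc x (List.mem_append.mpr (Or.inr hx)))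

lemma dsup_le {s s' : S} (hC : Compat s s') :
    nle ((bsup s s')⁻¹ * (bsup s s')) (bsup (s⁻¹ * s) (s'⁻¹ * s')) := by
  set j := bsup s s' with hj
  set E := bsup (s⁻¹ * s) (s'⁻¹ * s') with hE
  have hCE : Compat (s⁻¹ * s) (s'⁻¹ * s') := compat_idem (idem_di s) (idem_di s')
  have hEidem : E * E = E := bsup_idem (idem_di s) (idem_di s')
  have hjE : j = j * E := by
    refine nle_antisymm ?_ ?_
    · refine bsup_le hC ?_ ?_
      · have h1 : nle (s * (s⁻¹ * s)) (s * E) := nle_mul_left s (le_bsup_left hCE)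
        rw [← mul_assoc, mii] at h1
        exact nle_trans h1 (nle_mul_right E (le_bsup_left hC))
      · have h1 : nle (s' * (s'⁻¹ * s')) (s' * E) := nle_mul_left s' (le_bsup_right hCE)
        rw [← mul_assoc, mii] at h1
        exact nle_trans h1 (nle_mul_right E (le_bsup_right hC))
    · have h1 : nle (j * E) (j * 1) := nle_mul_left j (idem_nle_one hEidem)
      rwa [mul_one] at h1
  have hdj : j⁻¹ * j = (j⁻¹ * j) * E := by
    conv_lhs => rw [hjE]
    rw [mul_inv_rev', idem_inv hEidem]
    have h1 : E * j⁻¹ * (j * E) = E * ((j⁻¹ * j) * E) := by simp only [mul_assoc]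
    rw [h1, ← mul_assoc, idem_comm hEidem (idem_di j), mul_assoc, mul_assoc, hEidem,
      ← mul_assoc]
  exact ⟨j⁻¹ * j, idem_di j, hdj⟩

end Preceq

end St3Aux

/-- In a Boolean inverse ∧-monoid, the relation `≡` (mutual
`⪯`) is universal on the non-zero idempotents iff `S` is 0-simplifying. -/
theorem statement3 (S : Type u) [BooleanInverseMeetMonoid S] :
    (∀ e f : S, e * e = e → e ≠ 0 → f * f = f → f ≠ 0 → Preceq e f ∧ Preceq f e) ↔
      ZeroSimplifying S := by
  open St3Aux in
  constructor
  · -- universal ≡ implies 0-simplifying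
    intro h I hI
    obtain ⟨⟨hne, hmul⟩, hvee⟩ := hI
    obtain ⟨a0, ha0⟩ := hne
    have h0 : (0 : S) ∈ I := by
      have := (hmul a0 ha0 0).1
      rwa [zmul] at this
    by_cases hI0 : I = {0}
    · exact Or.inl hI0
    right
    have hex : ∃ a ∈ I, a ≠ 0 := by
      by_contra hco
      push_neg at hco
      apply hI0
      ext x
      simp only [Set.mem_singleton_iff]
      exact ⟨fun hx => hco x hx, fun hx => hx ▸ h0⟩
    obtain ⟨a, haI, ha0'⟩ := hex
    have hdaI : a⁻¹ * a ∈ I := (hmul a haI a⁻¹).1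
    have hda_idem : (a⁻¹ * a) * (a⁻¹ * a) = a⁻¹ * a := idem_di a
    have hda_ne : a⁻¹ * a ≠ 0 := by
      intro hz
      apply ha0'
      rw [← mii a, mul_assoc, hz, mulz]
    have hfold : ∀ m : List S, (∀ y ∈ m, y * y = y) → (∀ y ∈ m, y ∈ I) → foldj m ∈ I := by
      intro m
      induction m with
      | nil => intro _ _; exact h0
      | cons aa tt ih =>
        intro h1 h2
        simp only [foldj_cons]
        exact hvee aa (h2 aa (List.mem_cons_self)) (foldj tt)
          (ih (fun y hy => h1 y (List.mem_cons_of_mem aa hy))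
            (fun y hy => h2 y (List.mem_cons_of_mem aa hy)))
          (compat_idem (h1 aa (List.mem_cons_self))
            (fold_idem (fun y hy => h1 y (List.mem_cons_of_mem aa hy))))
    have hidem : ∀ g : S, g * g = g → g ∈ I := by
      intro g hgidem
      by_cases hg0 : g = 0
      · rw [hg0]; exact h0
      obtain ⟨hpre, _⟩ := h g (a⁻¹ * a) hgidem hg0 hda_idem hda_ne
      obtain ⟨l, hne2, hr, hd, hlub⟩ := hpre
      have hxI : ∀ x ∈ l, x⁻¹ * x ∈ I := by
        intro x hx
        obtain ⟨h', hh', heq⟩ := hr x hx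
        have h1 : x * x⁻¹ ∈ I := by rw [heq]; exact (hmul _ hdaI h').1
        have h2 : x ∈ I := by
          have := (hmul _ h1 x).2
          rwa [mii] at this
        exact (hmul x h2 x⁻¹).1
      have hm : ∀ y ∈ l.map (fun x => x⁻¹ * x), y * y = y := by
        intro y hy
        obtain ⟨x, _, rfl⟩ := List.mem_map.mp hy
        exact idem_di x
      have hub : ∀ y ∈ l.map (fun x => x⁻¹ * x), nle y g := by
        intro y hy
        obtain ⟨x, hx, rfl⟩ := List.mem_map.mp hy
        exact hd x hx
      have hgfold : g = foldj (l.map (fun x => x⁻¹ * x)) :=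
        fold_eq_of_lub hm hub
          (fun c hc => hlub c (fun x hx => hc (x⁻¹ * x) (List.mem_map_of_mem hx)))
      rw [hgfold]
      refine hfold _ hm ?_
      intro y hy
      obtain ⟨x, hx, rfl⟩ := List.mem_map.mp hy
      exact hxI x hx
    ext s
    simp only [Set.mem_univ, iff_true]
    have hds : s⁻¹ * s ∈ I := hidem _ (idem_di s)
    have := (hmul _ hds s).1
    rwa [← mul_assoc, mii] at this
  · -- 0-simplifying implies universal ≡
    intro hzs e f he hne hf hnf
    have key : ∀ e f : S, e * e = e → f * f = f → f ≠ 0 → Preceq e f := by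
      intro e f he hf hnf
      have hJideal : IsVIdeal {s : S | Preceq (s⁻¹ * s) f} := by
        refine ⟨⟨⟨0, ?_⟩, ?_⟩, ?_⟩
        · show Preceq ((0 : S)⁻¹ * 0) f
          rw [zero_inv, mulz]
          exact preceq_zero f
        · intro a ha s
          constructor
          · show Preceq ((s * a)⁻¹ * (s * a)) f
            refine preceq_down (idem_di (s * a)) (idem_di a) ?_ ha
            rw [dconj]
            have h1 := nle_conj_dd (c := a⁻¹) (idem_di s)
            rwa [inv_invS] at h1
          · show Preceq ((a * s)⁻¹ * (a * s)) f
            exact preceq_mul_right ha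
        · intro a ha b hb hC
          show Preceq ((bsup a b)⁻¹ * (bsup a b)) f
          exact preceq_down (idem_di _) (bsup_idem (idem_di a) (idem_di b)) (dsup_le hC)
            (preceq_sup (idem_di a) (idem_di b) ha hb)
      rcases hzs _ hJideal with h1 | h1
      · exfalso
        have hfJ : f ∈ {s : S | Preceq (s⁻¹ * s) f} := by
          show Preceq (f⁻¹ * f) f
          rw [idem_inv hf, hf]
          exact preceq_idem_self hf
        rw [h1] at hfJ
        exact hnf hfJ
      · have heJ : e ∈ {s : S | Preceq (s⁻¹ * s) f} := by rw [h1]; trivial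
        have h2 : Preceq (e⁻¹ * e) f := heJ
        rwa [idem_inv he, he] at h2
    exact ⟨key e f he hf hnf, key f e hf he hne⟩
end

section
/- Let S be a fundamental countable Boolean inverse ∧-monoid. If S is 0-simplifying then either S is a Tarski monoid or S is isomorphic to a finite symmetric inverse monoid I_n (the inverse monoid of all partial bijections between subsets of a finite set {1, ..., n} under composition). -/
universe u

namespace IMS
variable {S : Type u} [InverseMonoidWithZero S]

theorem zmul (a : S) : 0 * a = 0 := InverseMonoidWithZero.zero_mul' a
theorem mulz (a : S) : a * 0 = 0 := InverseMonoidWithZero.mul_zero' a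
theorem invu : ∀ a b : S, a * b * a = a → b * a * b = b → b = a⁻¹ :=
  InverseMonoidWithZero.inv_unique
theorem mim (a : S) : a * a⁻¹ * a = a := InverseMonoidWithZero.mul_inv_mul a
theorem imi (a : S) : a⁻¹ * a * a⁻¹ = a⁻¹ := InverseMonoidWithZero.inv_mul_inv a
theorem mim' (a : S) : a * (a⁻¹ * a) = a := by rw [← mul_assoc]; exact mim a
theorem imi' (a : S) : a⁻¹ * (a * a⁻¹) = a⁻¹ := by rw [← mul_assoc]; exact imi a

theorem absorb {e : S} (he : e * e = e) (x : S) : e * (e * x) = e * x := by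
  rw [← mul_assoc, he]

theorem mim_ab (a x : S) : a * (a⁻¹ * (a * x)) = a * x := by
  rw [← mul_assoc, ← mul_assoc, mim]
theorem imi_ab (a x : S) : a⁻¹ * (a * (a⁻¹ * x)) = a⁻¹ * x := by
  rw [← mul_assoc, ← mul_assoc, imi]

theorem inv_inv' (a : S) : a⁻¹⁻¹ = a := (invu a⁻¹ a (imi a) (mim a)).symm

theorem zinv : (0 : S)⁻¹ = 0 :=
  (invu (0:S) 0 (by simp only [mulz]) (by simp only [mulz])).symm

theorem idem_inv {e : S} (he : e * e = e) : e⁻¹ = e :=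
  (invu e e (by rw [he, he]) (by rw [he, he])).symm

/-- product of idempotents is idempotent -/
theorem idem_mul {e f : S} (he : e * e = e) (hf : f * f = f) :
    (e * f) * (e * f) = e * f := by
  have key : f * (e*f)⁻¹ * e = (e*f)⁻¹ := by
    apply invu
    · calc (e*f) * (f * (e*f)⁻¹ * e) * (e*f)
          = e * (f * (f * ((e*f)⁻¹ * (e * (e * f))))) := by simp only [mul_assoc]
        _ = e * (f * ((e*f)⁻¹ * (e * f))) := by rw [absorb hf, absorb he]
        _ = (e * f) * ((e*f)⁻¹ * (e * f)) := by rw [← mul_assoc e f]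
        _ = e * f := mim' _
    · calc (f * (e*f)⁻¹ * e) * (e*f) * (f * (e*f)⁻¹ * e)
          = f * ((e*f)⁻¹ * (e * (e * (f * (f * ((e*f)⁻¹ * e)))))) := by simp only [mul_assoc]
        _ = f * ((e*f)⁻¹ * (e * (f * ((e*f)⁻¹ * e)))) := by rw [absorb he, absorb hf]
        _ = f * ((e*f)⁻¹ * ((e * f) * ((e*f)⁻¹ * e))) := by rw [← mul_assoc e f]
        _ = f * ((e*f)⁻¹ * e) := by rw [imi_ab]
        _ = f * (e*f)⁻¹ * e := by rw [mul_assoc]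
  have h2 : (f * (e*f)⁻¹ * e) * (f * (e*f)⁻¹ * e) = f * (e*f)⁻¹ * e := by
    calc (f * (e*f)⁻¹ * e) * (f * (e*f)⁻¹ * e)
        = f * ((e*f)⁻¹ * ((e * f) * ((e*f)⁻¹ * e))) := by
          simp only [mul_assoc]
      _ = f * ((e*f)⁻¹ * e) := by rw [imi_ab]
      _ = f * (e*f)⁻¹ * e := by rw [mul_assoc]
  have hbb : (e*f)⁻¹ * (e*f)⁻¹ = (e*f)⁻¹ := by rw [← key]; exact h2
  have h3 : e * f = (e*f)⁻¹ := by
    conv_lhs => rw [← inv_inv' (e*f)]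
    rw [idem_inv hbb]
  rw [h3]; exact hbb

theorem idem_comm {e f : S} (he : e * e = e) (hf : f * f = f) :
    e * f = f * e := by
  have hef := idem_mul he hf
  have hfe := idem_mul hf he
  have h1 : f * e = (e * f)⁻¹ := by
    apply invu
    · calc e * f * (f * e) * (e * f) = e * (f * f) * (e * (e * f)) := by simp only [mul_assoc]
        _ = e * f * (e * (e * f)) := by rw [hf]
        _ = e * f * (e * f) := by rw [absorb he]
        _ = e * f := hef
    · calc f * e * (e * f) * (f * e) = f * (e * (e * (f * (f * e)))) := by simp only [mul_assoc]
        _ = f * (e * (f * e)) := by rw [absorb he, absorb hf]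
        _ = f * e * (f * e) := by simp only [mul_assoc]
        _ = f * e := hfe
  rw [h1, idem_inv hef]

theorem mul_inv_rev' (a b : S) : (a * b)⁻¹ = b⁻¹ * a⁻¹ := by
  have hbb : (b * b⁻¹) * (b * b⁻¹) = b * b⁻¹ := by rw [mul_assoc, imi']
  have haa : (a⁻¹ * a) * (a⁻¹ * a) = a⁻¹ * a := by rw [mul_assoc, mim']
  have hd : b * b⁻¹ * (a⁻¹ * a) = a⁻¹ * a * (b * b⁻¹) := idem_comm hbb haa
  symm; apply invu
  · calc a * b * (b⁻¹ * a⁻¹) * (a * b)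
        = a * (b * b⁻¹ * (a⁻¹ * a)) * b := by simp only [mul_assoc]
      _ = a * (a⁻¹ * a * (b * b⁻¹)) * b := by rw [hd]
      _ = (a * (a⁻¹ * a)) * (b * (b⁻¹ * b)) := by simp only [mul_assoc]
      _ = a * b := by rw [mim', mim']
  · calc b⁻¹ * a⁻¹ * (a * b) * (b⁻¹ * a⁻¹)
        = b⁻¹ * (a⁻¹ * a * (b * b⁻¹)) * a⁻¹ := by simp only [mul_assoc]
      _ = b⁻¹ * (b * b⁻¹ * (a⁻¹ * a)) * a⁻¹ := by rw [hd]
      _ = (b⁻¹ * (b * b⁻¹)) * (a⁻¹ * (a * a⁻¹)) := by simp only [mul_assoc]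
      _ = b⁻¹ * a⁻¹ := by rw [imi', imi']

theorem dd_idem (a : S) : (a * a⁻¹) * (a * a⁻¹) = a * a⁻¹ := by rw [mul_assoc, imi']
theorem rr_idem (a : S) : (a⁻¹ * a) * (a⁻¹ * a) = a⁻¹ * a := by rw [mul_assoc, mim']

end IMS

namespace Order2
open IMS
variable {S : Type u} [InverseMonoidWithZero S]

theorem swap_idem {e f : S} (he : e * e = e) (hf : f * f = f) (x : S) :
    e * (f * x) = f * (e * x) := by rw [← mul_assoc, idem_comm he hf, mul_assoc]

theorem nle_refl (a : S) : nle a a := ⟨a * a⁻¹, dd_idem a, (mim a).symm⟩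

theorem nle_zero (a : S) : nle (0 : S) a := ⟨0, zmul 0, (zmul a).symm⟩

theorem nle_trans {a b c : S} (h1 : nle a b) (h2 : nle b c) : nle a c := by
  obtain ⟨e, he, hab⟩ := h1; obtain ⟨f, hf, hbc⟩ := h2
  exact ⟨e * f, idem_mul he hf, by rw [hab, hbc, mul_assoc]⟩

theorem nle_dd {a b : S} (h : nle a b) : a = a * a⁻¹ * b := by
  obtain ⟨e, he, hab⟩ := h
  have : a * a⁻¹ * b = a := by
    rw [hab, mul_inv_rev', idem_inv he]
    calc e * b * (b⁻¹ * e) * b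
        = e * ((b * b⁻¹) * e) * b := by simp only [mul_assoc]
      _ = e * (e * (b * b⁻¹)) * b := by rw [idem_comm (dd_idem b) he]
      _ = (e * (b * b⁻¹)) * b := by rw [absorb he]
      _ = e * (b * (b⁻¹ * b)) := by simp only [mul_assoc]
      _ = e * b := by rw [mim']
  exact this.symm

theorem nle_rr {a b : S} (h : nle a b) : a = b * (a⁻¹ * a) := by
  obtain ⟨e, he, hab⟩ := h
  have : b * (a⁻¹ * a) = a := by
    rw [hab, mul_inv_rev', idem_inv he]
    calc b * ((b⁻¹ * e) * (e * b))
        = b * b⁻¹ * (e * (e * b)) := by simp only [mul_assoc]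
      _ = b * b⁻¹ * (e * b) := by rw [absorb he]
      _ = (b * b⁻¹) * e * b := by rw [← mul_assoc]
      _ = e * (b * b⁻¹) * b := by rw [idem_comm (dd_idem b) he]
      _ = e * (b * (b⁻¹ * b)) := by simp only [mul_assoc]
      _ = e * b := by rw [mim']
  exact this.symm

theorem nle_of_dd {a b : S} (h : a = a * a⁻¹ * b) : nle a b := ⟨a * a⁻¹, dd_idem a, h⟩

theorem nle_of_right {a b f : S} (hf : f * f = f) (h : a = b * f) : nle a b := by
  refine ⟨b * f * b⁻¹, ?_, ?_⟩
  · calc (b * f * b⁻¹) * (b * f * b⁻¹)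
        = b * (f * ((b⁻¹ * b) * (f * b⁻¹))) := by simp only [mul_assoc]
      _ = b * ((b⁻¹ * b) * (f * (f * b⁻¹))) := by
          rw [swap_idem hf (rr_idem b)]
      _ = b * ((b⁻¹ * b) * (f * b⁻¹)) := by rw [absorb hf]
      _ = b * (b⁻¹ * (b * (f * b⁻¹))) := by simp only [mul_assoc]
      _ = b * (f * b⁻¹) := by rw [mim_ab]
      _ = b * f * b⁻¹ := by rw [mul_assoc]
  · calc a = b * f := h
      _ = b * (b⁻¹ * (b * f)) := (mim_ab b f).symm
      _ = b * ((b⁻¹ * b) * f) := by rw [← mul_assoc b⁻¹ b f]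
      _ = b * (f * (b⁻¹ * b)) := by rw [idem_comm (rr_idem b) hf]
      _ = (b * f * b⁻¹) * b := by simp only [mul_assoc]

theorem nle_antisymm {a b : S} (h1 : nle a b) (h2 : nle b a) : a = b := by
  have ha : a = a * a⁻¹ * b := nle_dd h1
  have hb : b = b * b⁻¹ * a := nle_dd h2
  have key : b * b⁻¹ * (a * a⁻¹ * b) = a * a⁻¹ * b := by
    calc b * b⁻¹ * (a * a⁻¹ * b)
        = (b * b⁻¹) * (a * a⁻¹) * b := by simp only [mul_assoc]
      _ = (a * a⁻¹) * (b * b⁻¹) * b := by rw [idem_comm (dd_idem b) (dd_idem a)]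
      _ = a * (a⁻¹ * (b * (b⁻¹ * b))) := by simp only [mul_assoc]
      _ = a * (a⁻¹ * b) := by rw [mim']
      _ = a * a⁻¹ * b := by rw [mul_assoc]
  symm
  calc b = b * b⁻¹ * a := hb
    _ = b * b⁻¹ * (a * a⁻¹ * b) := by rw [← ha]
    _ = a * a⁻¹ * b := key
    _ = a := ha.symm

end Order2

namespace Order3
open IMS Order2
variable {S : Type u} [InverseMonoidWithZero S]


theorem nle_rr' {a b : S} (h : nle a b) : b * (a⁻¹ * a) = a := (nle_rr h).symm

theorem nle_mul_right {a b : S} (c : S) (h : nle a b) : nle (a * c) (b * c) := by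
  obtain ⟨e, he, hab⟩ := h; exact ⟨e, he, by rw [hab, mul_assoc]⟩

theorem nle_mul_left {a b : S} (c : S) (h : nle a b) : nle (c * a) (c * b) := by
  have h1 : a = b * (a⁻¹ * a) := nle_rr h
  exact nle_of_right (rr_idem a) (by rw [mul_assoc c b, ← h1])

theorem nle_inv {a b : S} (h : nle a b) : nle a⁻¹ b⁻¹ := by
  obtain ⟨e, he, hab⟩ := h
  exact nle_of_right he (by rw [hab, mul_inv_rev', idem_inv he])

theorem nle_one_iff {a : S} : nle a 1 ↔ a * a = a := by
  constructor
  · rintro ⟨e, he, hab⟩; rw [hab, mul_one]; exact he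
  · intro ha; exact ⟨a, ha, (mul_one a).symm⟩

theorem idem_nle_one {a : S} (h : a * a = a) : nle a 1 := nle_one_iff.2 h

theorem eq_zero_of_rr {x : S} (h : x⁻¹ * x = 0) : x = 0 := by
  rw [← mim' x, h, mulz]

theorem eq_zero_of_dd {x : S} (h : x * x⁻¹ = 0) : x = 0 := by
  calc x = x * x⁻¹ * x := (mim x).symm
    _ = 0 * x := by rw [h]
    _ = 0 := zmul x

theorem conj_idem {e : S} (he : e * e = e) (s : S) :
    (s⁻¹ * e * s) * (s⁻¹ * e * s) = s⁻¹ * e * s := by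
  calc (s⁻¹ * e * s) * (s⁻¹ * e * s)
      = s⁻¹ * (e * ((s * s⁻¹) * (e * s))) := by simp only [mul_assoc]
    _ = s⁻¹ * ((s * s⁻¹) * (e * (e * s))) := by rw [swap_idem he (dd_idem s)]
    _ = s⁻¹ * ((s * s⁻¹) * (e * s)) := by rw [absorb he]
    _ = s⁻¹ * (s * (s⁻¹ * (e * s))) := by simp only [mul_assoc]
    _ = s⁻¹ * (e * s) := by rw [imi_ab]
    _ = s⁻¹ * e * s := by rw [mul_assoc]

theorem conj_idem' {e : S} (he : e * e = e) (s : S) :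
    (s * e * s⁻¹) * (s * e * s⁻¹) = s * e * s⁻¹ := by
  have := conj_idem he s⁻¹; rwa [inv_inv'] at this

theorem conj_nle {e : S} (he : e * e = e) (s : S) : nle (s⁻¹ * e * s) (s⁻¹ * s) := by
  refine ⟨s⁻¹ * e * s, conj_idem he s, ?_⟩
  calc s⁻¹ * e * s = s⁻¹ * (e * (s * (s⁻¹ * s))) := by rw [mim']; rw [mul_assoc]
    _ = (s⁻¹ * e * s) * (s⁻¹ * s) := by simp only [mul_assoc]

theorem conj_nle' {e : S} (he : e * e = e) (s : S) : nle (s * e * s⁻¹) (s * s⁻¹) := by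
  have := conj_nle he s⁻¹; rwa [inv_inv'] at this

theorem nle_conj {a b : S} (s t : S) (h : nle a b) : nle (s * a * t) (s * b * t) :=
  nle_mul_right t (nle_mul_left s h)

/-- s⁻¹ * e * s = d(e s) -/
theorem conj_as_rr {e : S} (he : e * e = e) (s : S) : (e * s)⁻¹ * (e * s) = s⁻¹ * e * s := by
  rw [mul_inv_rev', idem_inv he]
  calc s⁻¹ * e * (e * s) = s⁻¹ * (e * (e * s)) := by simp only [mul_assoc]
    _ = s⁻¹ * (e * s) := by rw [absorb he]
    _ = s⁻¹ * e * s := by rw [mul_assoc]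

theorem compat_symm {a b : S} (h : Compat a b) : Compat b a := by
  obtain ⟨h1, h2⟩ := h
  have e1 : b * a⁻¹ = (a * b⁻¹)⁻¹ := by rw [mul_inv_rev', inv_inv']
  have e2 : b⁻¹ * a = (a⁻¹ * b)⁻¹ := by rw [mul_inv_rev', inv_inv']
  constructor
  · rw [e1, idem_inv h1]; exact h1
  · rw [e2, idem_inv h2]; exact h2

theorem compat_idem {e f : S} (he : e * e = e) (hf : f * f = f) : Compat e f := by
  constructor
  · rw [idem_inv hf]; exact idem_mul he hf
  · rw [idem_inv he]; exact idem_mul he hf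

theorem orth_compat {a b : S} (h : Orth a b) : Compat a b := by
  obtain ⟨h1, h2⟩ := h
  exact ⟨by rw [h1, zmul], by rw [h2, zmul]⟩

theorem orth_symm {a b : S} (h : Orth a b) : Orth b a := by
  obtain ⟨h1, h2⟩ := h
  constructor
  · have : b * a⁻¹ = (a * b⁻¹)⁻¹ := by rw [mul_inv_rev', inv_inv']
    rw [this, h1, zinv]
  · have : b⁻¹ * a = (a⁻¹ * b)⁻¹ := by rw [mul_inv_rev', inv_inv']
    rw [this, h2, zinv]

theorem orth_inv {a b : S} (h : Orth a b) : Orth a⁻¹ b⁻¹ := by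
  obtain ⟨h1, h2⟩ := h
  exact ⟨by rw [inv_inv']; exact h2, by rw [inv_inv']; exact h1⟩

theorem compat_inv {a b : S} (h : Compat a b) : Compat a⁻¹ b⁻¹ := by
  obtain ⟨h1, h2⟩ := h
  exact ⟨by rw [inv_inv']; exact h2, by rw [inv_inv']; exact h1⟩

/-- if a⁻¹b is idempotent then a⁻¹ b = a⁻¹ (b b⁻¹) b ≤ d(a), d(b) -/
theorem compat_rr_nle {a b : S} (h : (a⁻¹ * b) * (a⁻¹ * b) = a⁻¹ * b) :
    nle (a⁻¹ * b) (b⁻¹ * b) := by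
  have hinv : b⁻¹ * a = a⁻¹ * b := by
    have : b⁻¹ * a = (a⁻¹ * b)⁻¹ := by rw [mul_inv_rev', inv_inv']
    rw [this, idem_inv h]
  have key : a⁻¹ * b = (b⁻¹ * (a * a⁻¹) * b) := by
    calc a⁻¹ * b = (a⁻¹ * b) * (a⁻¹ * b) := h.symm
      _ = (b⁻¹ * a) * (a⁻¹ * b) := by rw [hinv]
      _ = b⁻¹ * (a * a⁻¹) * b := by simp only [mul_assoc]
  rw [key]; exact conj_nle (dd_idem a) b

theorem compat_rr_nle' {a b : S} (h : (a⁻¹ * b) * (a⁻¹ * b) = a⁻¹ * b) :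
    nle (a⁻¹ * b) (a⁻¹ * a) := by
  have hinv : b⁻¹ * a = a⁻¹ * b := by
    have : b⁻¹ * a = (a⁻¹ * b)⁻¹ := by rw [mul_inv_rev', inv_inv']
    rw [this, idem_inv h]
  have key : a⁻¹ * b = (a⁻¹ * (b * b⁻¹) * a) := by
    calc a⁻¹ * b = (a⁻¹ * b) * (a⁻¹ * b) := h.symm
      _ = (a⁻¹ * b) * (b⁻¹ * a) := by rw [hinv]
      _ = a⁻¹ * (b * b⁻¹) * a := by simp only [mul_assoc]
  rw [key]; exact conj_nle (dd_idem b) a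

end Order3

namespace Sup4
open IMS Order2 Order3 DistributiveInverseMonoid
variable {S : Type u} [DistributiveInverseMonoid S]

theorem le_bsup_left {a b : S} (h : Compat a b) : nle a (bsup a b) := le_sup_left a b h
theorem le_bsup_right {a b : S} (h : Compat a b) : nle b (bsup a b) := le_sup_right a b h
theorem bsup_le {a b c : S} (h : Compat a b) (h1 : nle a c) (h2 : nle b c) :
    nle (bsup a b) c := sup_le a b c h h1 h2
theorem mul_bsup {a b : S} (c : S) (h : Compat a b) :
    c * bsup a b = bsup (c * a) (c * b) := mul_sup a b c h
theorem bsup_mul {a b : S} (c : S) (h : Compat a b) :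
    bsup a b * c = bsup (a * c) (b * c) := sup_mul a b c h

theorem compat_zero_right (a : S) : Compat a 0 := by
  constructor
  · rw [zinv, mulz, mulz]
  · rw [mulz, mulz]

theorem compat_zero_left (a : S) : Compat 0 a := compat_symm (compat_zero_right a)

theorem bsup_zero (a : S) : bsup a 0 = a :=
  nle_antisymm (bsup_le (compat_zero_right a) (nle_refl a) (nle_zero a))
    (le_bsup_left (compat_zero_right a))

theorem zero_bsup (a : S) : bsup 0 a = a :=
  nle_antisymm (bsup_le (compat_zero_left a) (nle_zero a) (nle_refl a))
    (le_bsup_right (compat_zero_left a))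

theorem idem_of_nle_one {a : S} (h : nle a 1) : a * a = a := nle_one_iff.1 h

theorem bsup_idem {e f : S} (he : e * e = e) (hf : f * f = f) :
    bsup e f * bsup e f = bsup e f :=
  idem_of_nle_one (bsup_le (compat_idem he hf) (idem_nle_one he) (idem_nle_one hf))

theorem inv_bsup {a b : S} (h : Compat a b) : (bsup a b)⁻¹ = bsup a⁻¹ b⁻¹ := by
  have h' := compat_inv h
  apply nle_antisymm
  · have h1 : nle (bsup a b) (bsup a⁻¹ b⁻¹)⁻¹ := by
      apply bsup_le h
      · have := nle_inv (le_bsup_left h'); rwa [inv_inv'] at this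
      · have := nle_inv (le_bsup_right h'); rwa [inv_inv'] at this
    have := nle_inv h1; rwa [inv_inv'] at this
  · exact bsup_le h' (nle_inv (le_bsup_left h)) (nle_inv (le_bsup_right h))

theorem compat_bsup {a b c : S} (hab : Compat a b) (hac : Compat a c) (hbc : Compat b c) :
    Compat a (bsup b c) := by
  constructor
  · rw [inv_bsup hbc, mul_bsup a (compat_inv hbc)]
    exact bsup_idem hab.1 hac.1
  · rw [mul_bsup a⁻¹ hbc]
    exact bsup_idem hab.2 hac.2

/-- fold join of a list -/
def listSup : List S → S
  | [] => 0
  | x :: xs => bsup x (listSup xs)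

theorem compat_listSup_aux (l : List S) :
    List.Pairwise Compat l → ∀ x : S, (∀ y ∈ l, Compat x y) → Compat x (listSup l) := by
  induction l with
  | nil => exact fun _ x _ => compat_zero_right x
  | cons y ys ih =>
    intro hl x hx
    rw [List.pairwise_cons] at hl
    exact compat_bsup (hx y (by simp)) (ih hl.2 x (fun z hz => hx z (by simp [hz])))
      (ih hl.2 y hl.1)

theorem compat_listSup {l : List S} (hl : List.Pairwise Compat l) {x : S}
    (hx : ∀ y ∈ l, Compat x y) : Compat x (listSup l) :=
  compat_listSup_aux l hl x hx

theorem le_listSup {l : List S} (hl : List.Pairwise Compat l) {x : S} (hx : x ∈ l) :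
    nle x (listSup l) := by
  induction l with
  | nil => simp at hx
  | cons y ys ih =>
    rw [List.pairwise_cons] at hl
    rcases List.mem_cons.1 hx with rfl | hx'
    · exact le_bsup_left (compat_listSup hl.2 hl.1)
    · exact nle_trans (ih hl.2 hx') (le_bsup_right (compat_listSup hl.2 hl.1))

theorem listSup_le {l : List S} (hl : List.Pairwise Compat l) {c : S}
    (hc : ∀ x ∈ l, nle x c) : nle (listSup l) c := by
  induction l with
  | nil => exact nle_zero c
  | cons y ys ih =>
    rw [List.pairwise_cons] at hl
    exact bsup_le (compat_listSup hl.2 hl.1) (hc y (by simp))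
      (ih hl.2 (fun z hz => hc z (by simp [hz])))

theorem mul_listSup {l : List S} (hl : List.Pairwise Compat l) (c : S) :
    c * listSup l = listSup (l.map (fun x => c * x)) := by
  induction l with
  | nil => exact mulz c
  | cons y ys ih =>
    rw [List.pairwise_cons] at hl
    show c * bsup y (listSup ys) = bsup (c * y) (listSup (ys.map (fun x => c * x)))
    rw [mul_bsup c (compat_listSup hl.2 hl.1), ih hl.2]

theorem listSup_mul {l : List S} (hl : List.Pairwise Compat l) (c : S) :
    listSup l * c = listSup (l.map (fun x => x * c)) := by
  induction l with
  | nil => exact zmul c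
  | cons y ys ih =>
    rw [List.pairwise_cons] at hl
    show bsup y (listSup ys) * c = bsup (y * c) (listSup (ys.map (fun x => x * c)))
    rw [bsup_mul c (compat_listSup hl.2 hl.1), ih hl.2]

theorem inv_listSup {l : List S} (hl : List.Pairwise Compat l) :
    (listSup l)⁻¹ = listSup (l.map (fun x => x⁻¹)) := by
  induction l with
  | nil => exact zinv
  | cons y ys ih =>
    rw [List.pairwise_cons] at hl
    show (bsup y (listSup ys))⁻¹ = bsup y⁻¹ (listSup (ys.map (fun x => x⁻¹)))
    rw [inv_bsup (compat_listSup hl.2 hl.1), ih hl.2]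

theorem listSup_zero {l : List S} (h : ∀ x ∈ l, x = 0) : listSup l = 0 := by
  induction l with
  | nil => rfl
  | cons y ys ih =>
    show bsup y (listSup ys) = 0
    rw [h y (by simp), ih (fun z hz => h z (by simp [hz])), bsup_zero]

theorem listSup_eq_of {l : List S} (hl : List.Pairwise Compat l) {m : S} (hm : m ∈ l)
    (h : ∀ x ∈ l, x = 0 ∨ x = m) : listSup l = m := by
  apply nle_antisymm
  · apply listSup_le hl
    intro x hx
    rcases h x hx with rfl | rfl
    · exact nle_zero m
    · exact nle_refl x
  · exact le_listSup hl hm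

theorem pairwise_compat_idem {l : List S} (h : ∀ x ∈ l, x * x = x) :
    List.Pairwise Compat l := by
  exact List.pairwise_of_forall_mem_list (fun a ha b hb => compat_idem (h a ha) (h b hb))

theorem listSup_idem {l : List S} (h : ∀ x ∈ l, x * x = x) :
    listSup l * listSup l = listSup l :=
  idem_of_nle_one (listSup_le (pairwise_compat_idem h) (fun x hx => idem_nle_one (h x hx)))

theorem listSup_nle_listSup {l l' : List S} (hl : List.Pairwise Compat l)
    (hl' : List.Pairwise Compat l') (h : ∀ x ∈ l, x = 0 ∨ x ∈ l') :
    nle (listSup l) (listSup l') := by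
  apply listSup_le hl
  intro x hx
  rcases h x hx with rfl | hx'
  · exact nle_zero _
  · exact le_listSup hl' hx'

end Sup4

namespace Atom5
open IMS Order2 Order3 Sup4

def IsAtomE {S : Type u} [InverseMonoidWithZero S] (e : S) : Prop :=
  e * e = e ∧ e ≠ 0 ∧ ∀ f : S, f * f = f → nle f e → f = 0 ∨ f = e

variable {S : Type u} [InverseMonoidWithZero S]

theorem idem_nle_absorb {f h : S} (hf : f * f = f) (hh : h * h = h) (hle : nle f h) :
    f * h = f ∧ h * f = f := by
  have h1 : f = f * h := by
    have := nle_dd hle; rwa [idem_inv hf, hf] at this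
  exact ⟨h1.symm, by rw [← idem_comm hf hh]; exact h1.symm⟩

theorem atom_mul_idem {e h : S} (hatom : IsAtomE e) (hh : h * h = h) :
    e * h = 0 ∨ e * h = e := by
  exact hatom.2.2 (e * h) (idem_mul hatom.1 hh) (nle_of_right hh rfl)

theorem atoms_orth {e f : S} (hae : IsAtomE e) (haf : IsAtomE f) (hne : e ≠ f) :
    e * f = 0 := by
  rcases atom_mul_idem hae haf.1 with h | h
  · exact h
  · exfalso; apply hne
    have h2 : f * e = 0 ∨ f * e = f := atom_mul_idem haf hae.1
    rw [idem_comm haf.1 hae.1] at h2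
    rcases h2 with h2 | h2
    · rw [h2] at h; exact absurd h.symm hae.2.1
    · rw [h2] at h; exact h.symm

theorem dom_full {e s : S} (hatom : IsAtomE e) (h : s⁻¹ * e * s ≠ 0) :
    e * (s * s⁻¹) = e := by
  rcases atom_mul_idem hatom (dd_idem s) with h0 | h1
  · exfalso; apply h
    have hes : e * s = 0 := by
      calc e * s = e * (s * s⁻¹ * s) := by rw [mim]
        _ = e * (s * s⁻¹) * s := by rw [← mul_assoc]
      rw [h0, zmul]
    rw [mul_assoc, hes, mulz]
  · exact h1

theorem conj_back {e s g : S} (hatom : IsAtomE e) (h : s⁻¹ * e * s = g) (hg : g ≠ 0) :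
    s * g * s⁻¹ = e := by
  have hfull : e * (s * s⁻¹) = e := dom_full hatom (by rw [h]; exact hg)
  have hfull' : (s * s⁻¹) * e = e := by rw [idem_comm (dd_idem s) hatom.1]; exact hfull
  calc s * g * s⁻¹ = s * (s⁻¹ * e * s) * s⁻¹ := by rw [h]
    _ = (s * s⁻¹) * (e * (s * s⁻¹)) := by simp only [mul_assoc]
    _ = (s * s⁻¹) * e := by rw [hfull]
    _ = e := hfull'

theorem atom_conj {e : S} (hatom : IsAtomE e) (s : S) :
    s⁻¹ * e * s = 0 ∨ IsAtomE (s⁻¹ * e * s) := by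
  by_cases hg : s⁻¹ * e * s = 0
  · exact Or.inl hg
  right
  have hgi : (s⁻¹ * e * s) * (s⁻¹ * e * s) = s⁻¹ * e * s := conj_idem hatom.1 s
  have hback : s * (s⁻¹ * e * s) * s⁻¹ = e := conj_back hatom rfl hg
  refine ⟨hgi, hg, ?_⟩
  intro f hf hle
  by_cases hf0 : f = 0
  · exact Or.inl hf0
  right
  have hfd : nle f (s⁻¹ * s) := nle_trans hle (conj_nle hatom.1 s)
  have habs := idem_nle_absorb hf (rr_idem s) hfd
  -- X := s * f * s⁻¹
  have hXidem : (s * f * s⁻¹) * (s * f * s⁻¹) = s * f * s⁻¹ := conj_idem' hf s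
  have hXle : nle (s * f * s⁻¹) e := by
    have := nle_conj s s⁻¹ hle
    rwa [hback] at this
  have hrecover : s⁻¹ * (s * f * s⁻¹) * s = f := by
    calc s⁻¹ * (s * f * s⁻¹) * s = (s⁻¹ * s) * (f * (s⁻¹ * s)) := by simp only [mul_assoc]
      _ = (s⁻¹ * s) * f := by rw [habs.1]
      _ = f := habs.2
  have hX0 : s * f * s⁻¹ ≠ 0 := by
    intro h0
    apply hf0
    rw [← hrecover, h0, mulz, zmul]
  rcases hatom.2.2 _ hXidem hXle with h | h
  · exact absurd h hX0
  · rw [← hrecover, h]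

theorem atom_fixer (hfund : Fundamental S) {f u : S} (hatom : IsAtomE f)
    (hd : u⁻¹ * u = f) (hr : u * u⁻¹ = f) : u = f := by
  have huf : u * f = u := by rw [← hd, mim']
  have hfu : f * u = u := by rw [← hr, mul_assoc, ← mul_assoc, mim]
  have hcomm : ∀ e : S, e * e = e → u * e = e * u := by
    intro h hh
    rcases atom_mul_idem hatom hh with h0 | h1
    · have hh0 : h * f = 0 := by rw [idem_comm hh hatom.1]; exact h0
      have l1 : u * h = 0 := by
        calc u * h = u * f * h := by rw [huf]
          _ = u * (f * h) := by rw [mul_assoc]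
          _ = u * 0 := by rw [h0]
          _ = 0 := mulz u
      have l2 : h * u = 0 := by
        calc h * u = h * (f * u) := by rw [hfu]
          _ = h * f * u := by rw [← mul_assoc]
          _ = 0 * u := by rw [hh0]
          _ = 0 := zmul u
      rw [l1, l2]
    · have hh1 : h * f = f := by rw [idem_comm hh hatom.1]; exact h1
      have l1 : u * h = u := by
        calc u * h = u * f * h := by rw [huf]
          _ = u * (f * h) := by rw [mul_assoc]
          _ = u * f := by rw [h1]
          _ = u := huf
      have l2 : h * u = u := by
        calc h * u = h * (f * u) := by rw [hfu]
          _ = h * f * u := by rw [← mul_assoc]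
          _ = f * u := by rw [hh1]
          _ = u := hfu
      rw [l1, l2]
  have huu : u * u = u := hfund u hcomm
  have huinv : u⁻¹ = u := idem_inv huu
  rw [← hr, huinv]; exact huu.symm

theorem arrow_unique (hfund : Fundamental S) {f u v : S} (hatom : IsAtomE f)
    (hdu : u⁻¹ * u = f) (hdv : v⁻¹ * v = f) (hr : u * u⁻¹ = v * v⁻¹) : u = v := by
  have hw_d : (v⁻¹ * u)⁻¹ * (v⁻¹ * u) = f := by
    calc (v⁻¹ * u)⁻¹ * (v⁻¹ * u) = u⁻¹ * (v * v⁻¹) * u := by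
          rw [mul_inv_rev', inv_inv']; simp only [mul_assoc]
      _ = u⁻¹ * (u * u⁻¹) * u := by rw [← hr]
      _ = u⁻¹ * u := by rw [← mul_assoc, imi]
      _ = f := hdu
  have hw_r : (v⁻¹ * u) * (v⁻¹ * u)⁻¹ = f := by
    calc (v⁻¹ * u) * (v⁻¹ * u)⁻¹ = v⁻¹ * (u * u⁻¹) * v := by
          rw [mul_inv_rev', inv_inv']; simp only [mul_assoc]
      _ = v⁻¹ * (v * v⁻¹) * v := by rw [hr]
      _ = v⁻¹ * v := by rw [← mul_assoc, imi]
      _ = f := hdv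
  have hw : v⁻¹ * u = f := atom_fixer hfund hatom hw_d hw_r
  calc u = (u * u⁻¹) * u := (mim u).symm
    _ = (v * v⁻¹) * u := by rw [← hr]
    _ = v * (v⁻¹ * u) := by rw [mul_assoc]
    _ = v * f := by rw [hw]
    _ = v * (v⁻¹ * v) := by rw [← hdv]
    _ = v := mim' v
end Atom5

namespace Ideal6
open IMS Order2 Order3 Sup4 Atom5

variable {S : Type u} [DistributiveInverseMonoid S]

/-- the elements whose domain lies under a pencil with ranges under `e` -/
def idealSet (e : S) : Set S :=
  {s : S | ∃ l : List S, (∀ x ∈ l, nle (x * x⁻¹) e) ∧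
    nle (s⁻¹ * s) (listSup (l.map (fun x => x⁻¹ * x)))}

theorem map_rr_idem (l : List S) : ∀ z ∈ l.map (fun x => x⁻¹ * x), z * z = z := by
  intro z hz
  obtain ⟨x, _, rfl⟩ := List.mem_map.1 hz
  exact rr_idem x

theorem map_rr_pairwise (l : List S) : List.Pairwise Compat (l.map (fun x => x⁻¹ * x)) :=
  pairwise_compat_idem (map_rr_idem l)

theorem rr_bsup_nle {a b : S} (h : Compat a b) :
    nle ((bsup a b)⁻¹ * bsup a b) (bsup (a⁻¹ * a) (b⁻¹ * b)) := by
  have hT : Compat (a⁻¹ * a) (b⁻¹ * b) := compat_idem (rr_idem a) (rr_idem b)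
  have expand : (bsup a b)⁻¹ * bsup a b
      = bsup (bsup (a⁻¹ * a) (a⁻¹ * b)) (bsup (b⁻¹ * a) (b⁻¹ * b)) := by
    rw [inv_bsup h, bsup_mul (bsup a b) (compat_inv h), mul_bsup a⁻¹ h, mul_bsup b⁻¹ h]
  rw [expand]
  have h1 : nle (bsup (a⁻¹ * a) (a⁻¹ * b)) (bsup (a⁻¹ * a) (b⁻¹ * b)) := by
    apply bsup_le (compat_idem (rr_idem a) h.2)
    · exact le_bsup_left hT
    · exact nle_trans (compat_rr_nle h.2) (le_bsup_right hT)
  have hba : (b⁻¹ * a) * (b⁻¹ * a) = b⁻¹ * a := (compat_symm h).2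
  have h2 : nle (bsup (b⁻¹ * a) (b⁻¹ * b)) (bsup (a⁻¹ * a) (b⁻¹ * b)) := by
    apply bsup_le (compat_idem hba (rr_idem b))
    · exact nle_trans (compat_rr_nle hba) (le_bsup_left hT)
    · exact le_bsup_right hT
  apply bsup_le _ h1 h2
  exact compat_idem (bsup_idem (rr_idem a) h.2) (bsup_idem hba (rr_idem b))

theorem idealSet_videal (e : S) : IsVIdeal (idealSet e) := by
  constructor
  · constructor
    · refine ⟨0, [], fun x hx => by simp at hx, ?_⟩
      rw [zinv, zmul]
      exact nle_refl 0
    · rintro a ⟨l, hl, hd⟩ s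
      constructor
      · -- s * a
        refine ⟨l, hl, ?_⟩
        apply nle_trans _ hd
        have : (s * a)⁻¹ * (s * a) = a⁻¹ * (s⁻¹ * s) * a := by
          rw [mul_inv_rev']; simp only [mul_assoc]
        rw [this]
        exact conj_nle (rr_idem s) a
      · -- a * s
        refine ⟨l.map (fun x => x * s), ?_, ?_⟩
        · intro x hx
          obtain ⟨y, hy, rfl⟩ := List.mem_map.1 hx
          have hc : (y * s) * (y * s)⁻¹ = y * (s * s⁻¹) * y⁻¹ := by
            rw [mul_inv_rev']; simp only [mul_assoc]
          rw [hc]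
          exact nle_trans (conj_nle' (dd_idem s) y) (hl y hy)
        · have key : (a * s)⁻¹ * (a * s) = s⁻¹ * (a⁻¹ * a) * s := by
            rw [mul_inv_rev']; simp only [mul_assoc]
          rw [key]
          have step1 : nle (s⁻¹ * (a⁻¹ * a) * s)
              (s⁻¹ * listSup (l.map (fun x => x⁻¹ * x)) * s) :=
            nle_conj s⁻¹ s hd
          apply nle_trans step1
          rw [mul_assoc, listSup_mul (map_rr_pairwise l) s]
          have pw2 : List.Pairwise Compat ((l.map (fun x => x⁻¹ * x)).map (fun z => z * s)) := by
            apply List.pairwise_of_forall_mem_list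
            intro p hp q hq
            obtain ⟨zp, hzp, rfl⟩ := List.mem_map.1 hp
            obtain ⟨zq, hzq, rfl⟩ := List.mem_map.1 hq
            have hip := map_rr_idem l zp hzp
            have hiq := map_rr_idem l zq hzq
            constructor
            · have : (zp * s) * (zq * s)⁻¹ = zp * (s * s⁻¹) * zq := by
                rw [mul_inv_rev', idem_inv hiq]; simp only [mul_assoc]
              rw [this]
              have h1 : (zp * (s * s⁻¹)) * (zp * (s * s⁻¹)) = zp * (s * s⁻¹) :=
                idem_mul hip (dd_idem s)
              exact idem_mul h1 hiq
            · have : (zp * s)⁻¹ * (zq * s) = s⁻¹ * (zp * zq) * s := by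
                rw [mul_inv_rev', idem_inv hip]; simp only [mul_assoc]
              rw [this]
              exact conj_idem (idem_mul hip hiq) s
          rw [mul_listSup pw2 s⁻¹]
          have maps_eq : (((l.map (fun x => x⁻¹ * x)).map (fun z => z * s)).map
                (fun z => s⁻¹ * z))
              = (l.map (fun x => x * s)).map (fun x => x⁻¹ * x) := by
            simp only [List.map_map]
            apply List.map_congr_left
            intro x hx
            show s⁻¹ * (x⁻¹ * x * s) = (x * s)⁻¹ * (x * s)
            rw [mul_inv_rev']; simp only [mul_assoc]
          rw [maps_eq]
          exact nle_refl _
  · -- join closure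
    rintro a ⟨la, hla, hda⟩ b ⟨lb, hlb, hdb⟩ hab
    refine ⟨la ++ lb, ?_, ?_⟩
    · intro x hx
      rcases List.mem_append.1 hx with h | h
      · exact hla x h
      · exact hlb x h
    · apply nle_trans (rr_bsup_nle hab)
      have pwa := map_rr_pairwise la
      have pwb := map_rr_pairwise lb
      have pwab : List.Pairwise Compat ((la ++ lb).map (fun x => x⁻¹ * x)) :=
        map_rr_pairwise (la ++ lb)
      have hmem : ∀ x ∈ la.map (fun x => x⁻¹ * x),
          x ∈ (la ++ lb).map (fun x => x⁻¹ * x) := by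
        intro x hx
        rw [List.map_append]; exact List.mem_append.2 (Or.inl hx)
      have hmem' : ∀ x ∈ lb.map (fun x => x⁻¹ * x),
          x ∈ (la ++ lb).map (fun x => x⁻¹ * x) := by
        intro x hx
        rw [List.map_append]; exact List.mem_append.2 (Or.inr hx)
      apply bsup_le (compat_idem (rr_idem a) (rr_idem b))
      · exact nle_trans hda (listSup_nle_listSup pwa pwab (fun x hx => Or.inr (hmem x hx)))
      · exact nle_trans hdb (listSup_nle_listSup pwb pwab (fun x hx => Or.inr (hmem' x hx)))

theorem idem_mem_idealSet {e : S} (he : e * e = e) : e ∈ idealSet e := by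
  refine ⟨[e], ?_, ?_⟩
  · intro x hx
    rw [List.mem_singleton] at hx
    rw [hx, idem_inv he, he]
    exact nle_refl e
  · show nle (e⁻¹ * e) (listSup [e⁻¹ * e])
    show nle (e⁻¹ * e) (bsup (e⁻¹ * e) (listSup []))
    show nle (e⁻¹ * e) (bsup (e⁻¹ * e) 0)
    rw [bsup_zero]
    exact nle_refl _

end Ideal6

namespace Main7
open IMS Order2 Order3 Sup4 Atom5 Ideal6

variable {S : Type u} [InverseMonoidWithZero S]

theorem compat_refl (a : S) : Compat a a := ⟨dd_idem a, rr_idem a⟩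

theorem conj_as_dd {e : S} (he : e * e = e) (s : S) :
    (e * s) * (e * s)⁻¹ = e * (s * s⁻¹) * e := by
  rw [mul_inv_rev', idem_inv he]; simp only [mul_assoc]

theorem conj_exp (x y g : S) : (x * y)⁻¹ * g * (x * y) = y⁻¹ * (x⁻¹ * g * x) * y := by
  rw [mul_inv_rev']; simp only [mul_assoc]

open Classical in
/-- the candidate partial bijection on atoms induced by `s` -/
noncomputable def F (D : List S) (s : S) (i : Fin D.length) : Option (Fin D.length) :=
  if h : ∃ j, s⁻¹ * D.get i * s = D.get j then some h.choose else none

theorem Fspec {D : List S} (hnd : D.Nodup) (s : S) (i j : Fin D.length) :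
    F D s i = some j ↔ s⁻¹ * D.get i * s = D.get j := by
  unfold F
  split_ifs with hex
  · constructor
    · intro h
      obtain rfl : hex.choose = j := Option.some.inj h
      exact hex.choose_spec
    · intro h
      have h2 : D.get hex.choose = D.get j := by rw [← hex.choose_spec, h]
      rw [List.nodup_iff_injective_get.1 hnd h2]
  · constructor
    · intro h; exact absurd h (by simp)
    · intro h; exact absurd ⟨j, h⟩ hex

end Main7

namespace Main8
open IMS Order2 Order3 Sup4 Atom5 Ideal6 Main7

variable {S : Type u} [DistributiveInverseMonoid S]

theorem listSup_eq_of' {l : List S} {m : S} (hm : m ∈ l)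
    (h : ∀ x ∈ l, x = 0 ∨ x = m) : listSup l = m := by
  apply listSup_eq_of _ hm h
  apply List.pairwise_of_forall_mem_list
  intro x hx y hy
  rcases h x hx with h1 | h1
  · rw [h1]; exact compat_zero_left y
  · rcases h y hy with h2 | h2
    · rw [h1, h2]; exact compat_zero_right m
    · rw [h1, h2]; exact compat_refl m

theorem main_atom (hfund : Fundamental S) (D : List S) (hnd : D.Nodup)
    (hatoms : ∀ d ∈ D, IsAtomE d) (hsup : listSup D = 1)
    (htrans : ∀ d ∈ D, ∀ d' ∈ D, ∃ u : S, u⁻¹ * u = d ∧ u * u⁻¹ = d') :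
    ∃ (n : ℕ) (φ : S ≃ PEquiv (Fin n) (Fin n)),
      ∀ a b : S, φ (a * b) = (φ a).trans (φ b) := by
  classical
  have hget : ∀ i : Fin D.length, D.get i ∈ D := fun i => D.get_mem i
  have hatom_i : ∀ i : Fin D.length, IsAtomE (D.get i) := fun i => hatoms _ (hget i)
  have hidem : ∀ x ∈ D, x * x = x := fun x hx => (hatoms x hx).1
  have pwD : List.Pairwise Compat D := pairwise_compat_idem hidem
  have hne : ∀ i : Fin D.length, D.get i ≠ 0 := fun i => (hatom_i i).2.1
  have hgetinj : ∀ i j : Fin D.length, D.get i = D.get j → i = j :=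
    fun i j h => List.nodup_iff_injective_get.1 hnd h
  -- every atom occurs in D
  have hatom_get : ∀ g : S, IsAtomE g → ∃ j : Fin D.length, g = D.get j := by
    intro g hg
    have h1 : g = listSup (D.map (fun d => g * d)) := by
      have h2 : g * listSup D = listSup (D.map fun d => g * d) := mul_listSup pwD g
      rw [hsup, mul_one] at h2; exact h2
    by_contra hno
    push_neg at hno
    apply hg.2.1
    rw [h1]
    apply listSup_zero
    intro x hx
    obtain ⟨d, hd, rfl⟩ := List.mem_map.1 hx
    rcases atom_mul_idem hg (hidem d hd) with h0 | h1'
    · exact h0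
    · exfalso
      have hdg : d * g = g := by rw [← idem_comm hg.1 (hidem d hd)]; exact h1'
      rcases atom_mul_idem (hatoms d hd) hg.1 with h2 | h2
      · rw [hdg] at h2; exact hg.2.1 h2
      · rw [hdg] at h2
        obtain ⟨j, hj⟩ := List.mem_iff_get.1 hd
        exact hno j (by rw [h2, ← hj])
  have hconj : ∀ (s : S) (i : Fin D.length),
      s⁻¹ * D.get i * s = 0 ∨ ∃ j, s⁻¹ * D.get i * s = D.get j := by
    intro s i
    rcases atom_conj (hatom_i i) s with h | h
    · exact Or.inl h
    · exact Or.inr (hatom_get _ h)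
  have Fnone : ∀ (s : S) (i : Fin D.length),
      F D s i = none ↔ s⁻¹ * D.get i * s = 0 := by
    intro s i
    constructor
    · intro h
      rcases hconj s i with h0 | ⟨j, hj⟩
      · exact h0
      · rw [← Fspec hnd s i j] at hj
        rw [hj] at h; exact absurd h (by simp)
    · intro h0
      unfold F
      rw [dif_neg]
      rintro ⟨j, hj⟩
      rw [h0] at hj
      exact hne j hj.symm
  have hsymm : ∀ (s : S) (i j : Fin D.length),
      s⁻¹ * D.get i * s = D.get j → s * D.get j * s⁻¹ = D.get i :=
    fun s i j h => conj_back (hatom_i i) h (hne j)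
  have hinv : ∀ s : S, ∀ (a b : Fin D.length),
      a ∈ F D s⁻¹ b ↔ b ∈ F D s a := by
    intro s a b
    rw [Option.mem_def, Option.mem_def, Fspec hnd, Fspec hnd]
    constructor
    · intro h
      have h2 := hsymm s⁻¹ b a h
      rwa [inv_inv'] at h2
    · intro h
      have h2 := hsymm s a b h
      rw [inv_inv']
      exact h2
  set Φ : S → PEquiv (Fin D.length) (Fin D.length) :=
    fun s => PEquiv.mk (F D s) (F D s⁻¹) (hinv s) with hΦ
  have hΦapp : ∀ (s : S) (i : Fin D.length), (Φ s) i = F D s i := fun s i => rfl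
  -- injectivity
  have hinj : Function.Injective Φ := by
    intro s t h
    have hF : F D s = F D t := congrArg PEquiv.toFun h
    have hpt : ∀ d ∈ D, d * s = d * t := by
      intro d hd
      obtain ⟨i, hi⟩ := List.mem_iff_get.1 hd
      rw [← hi]
      have heq : F D s i = F D t i := congrFun hF i
      rcases hconj s i with h0 | ⟨j, hj⟩
      · have hns : F D s i = none := (Fnone s i).2 h0
        have hnt : F D t i = none := by rw [← heq]; exact hns
        have h0t : t⁻¹ * D.get i * t = 0 := (Fnone t i).1 hnt
        have hs0 : D.get i * s = 0 := by
          apply eq_zero_of_rr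
          rw [conj_as_rr (hatom_i i).1 s]
          exact h0
        have ht0 : D.get i * t = 0 := by
          apply eq_zero_of_rr
          rw [conj_as_rr (hatom_i i).1 t]
          exact h0t
        rw [hs0, ht0]
      · have hjs : F D s i = some j := (Fspec hnd s i j).2 hj
        have hjt : t⁻¹ * D.get i * t = D.get j :=
          (Fspec hnd t i j).1 (by rw [← heq]; exact hjs)
        have hfull_s : D.get i * (s * s⁻¹) = D.get i :=
          dom_full (hatom_i i) (by rw [hj]; exact hne j)
        have hfull_t : D.get i * (t * t⁻¹) = D.get i :=
          dom_full (hatom_i i) (by rw [hjt]; exact hne j)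
        apply arrow_unique hfund (hatom_i j)
        · rw [conj_as_rr (hatom_i i).1 s]; exact hj
        · rw [conj_as_rr (hatom_i i).1 t]; exact hjt
        · rw [conj_as_dd (hatom_i i).1 s, conj_as_dd (hatom_i i).1 t, hfull_s, hfull_t]
    calc s = 1 * s := (one_mul s).symm
      _ = listSup D * s := by rw [hsup]
      _ = listSup (D.map (fun d => d * s)) := listSup_mul pwD s
      _ = listSup (D.map (fun d => d * t)) := by rw [List.map_congr_left hpt]
      _ = listSup D * t := (listSup_mul pwD t).symm
      _ = 1 * t := by rw [hsup]
      _ = t := one_mul t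
  -- surjectivity
  have hsurj : Function.Surjective Φ := by
    intro π
    have hUex : ∀ i j : Fin D.length, ∃ u : S, u⁻¹ * u = D.get j ∧ u * u⁻¹ = D.get i :=
      fun i j => htrans _ (hget j) _ (hget i)
    choose U hUd hUr using hUex
    have hU0 : ∀ i j, U i j ≠ 0 := by
      intro i j h
      exact hne j (by rw [← hUd i j, h, zinv, zmul])
    have hUl : ∀ i j, D.get i * U i j = U i j := by
      intro i j
      rw [← hUr i j]; exact mim _
    have hUrt : ∀ i j, U i j * D.get j = U i j := by
      intro i j
      rw [← hUd i j]; exact mim' _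
    have hπinj : ∀ {i i' j : Fin D.length}, π i = some j → π i' = some j → i = i' := by
      intro i i' j h1 h2
      have e1 : π.symm j = some i := π.eq_some_iff.2 h1
      have e2 : π.symm j = some i' := π.eq_some_iff.2 h2
      rw [e1] at e2
      exact Option.some.inj e2
    set L : List S :=
      (List.finRange D.length).filterMap (fun i => (π i).map (fun j => U i j)) with hL
    have hmemL : ∀ x ∈ L, ∃ i j, π i = some j ∧ x = U i j := by
      intro x hx
      rw [hL, List.mem_filterMap] at hx
      obtain ⟨i, _, hi⟩ := hx
      obtain ⟨j, hj1, hj2⟩ := Option.map_eq_some_iff.1 hi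
      exact ⟨i, j, hj1, hj2.symm⟩
    have hUinL : ∀ i j, π i = some j → U i j ∈ L := by
      intro i j hπ
      rw [hL, List.mem_filterMap]
      exact ⟨i, List.mem_finRange i, by rw [hπ]; rfl⟩
    have horth : ∀ {i j i' j' : Fin D.length}, i ≠ i' → j ≠ j' →
        Orth (U i j) (U i' j') := by
      intro i j i' j' hii hjj
      have hgi : D.get i * D.get i' = 0 :=
        atoms_orth (hatom_i i) (hatom_i i') (fun h => hii (hgetinj _ _ h))
      have hgj : D.get j * D.get j' = 0 :=
        atoms_orth (hatom_i j) (hatom_i j') (fun h => hjj (hgetinj _ _ h))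
      have hinvl : D.get j' * (U i' j')⁻¹ = (U i' j')⁻¹ := by
        rw [← hUd i' j']; exact imi _
      have hinvr : (U i j)⁻¹ * D.get i = (U i j)⁻¹ := by
        rw [← hUr i j]; exact imi' _
      constructor
      · calc U i j * (U i' j')⁻¹
            = (U i j * D.get j) * (D.get j' * (U i' j')⁻¹) := by rw [hUrt, hinvl]
          _ = U i j * (D.get j * D.get j' * (U i' j')⁻¹) := by simp only [mul_assoc]
          _ = 0 := by rw [hgj, zmul, mulz]
      · calc (U i j)⁻¹ * U i' j'
            = ((U i j)⁻¹ * D.get i) * (D.get i' * U i' j') := by rw [hinvr, hUl]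
          _ = (U i j)⁻¹ * (D.get i * D.get i' * U i' j') := by simp only [mul_assoc]
          _ = 0 := by rw [hgi, zmul, mulz]
    have pwLorth : List.Pairwise Orth L := by
      rw [hL, List.pairwise_filterMap]
      apply List.Pairwise.imp ?_ (List.nodup_finRange D.length)
      intro i i' hii b hb b' hb'
      obtain ⟨j, hj1, hj2⟩ := Option.map_eq_some_iff.1 (Option.mem_def.1 hb)
      obtain ⟨j', hj1', hj2'⟩ := Option.map_eq_some_iff.1 (Option.mem_def.1 hb')
      rw [← hj2, ← hj2']
      apply horth hii
      intro hjj
      exact hii (hπinj hj1 (by rw [← hjj] at hj1'; exact hj1'))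
    have pwL : List.Pairwise Compat L := pwLorth.imp (fun h => orth_compat h)
    refine ⟨listSup L, ?_⟩
    have claimA : ∀ i j, π i = some j → D.get i * listSup L = U i j := by
      intro i j hπ
      rw [mul_listSup pwL]
      apply listSup_eq_of'
      · exact List.mem_map.2 ⟨U i j, hUinL i j hπ, hUl i j⟩
      · intro x hx
        obtain ⟨y, hy, rfl⟩ := List.mem_map.1 hx
        obtain ⟨i', j', hπ', rfl⟩ := hmemL y hy
        by_cases hii : i' = i
        · subst hii
          right
          rw [hπ] at hπ'
          have hjj := Option.some.inj hπ'
          rw [← hjj]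
          exact hUl i' j
        · left
          have hgi : D.get i * D.get i' = 0 :=
            atoms_orth (hatom_i i) (hatom_i i') (fun h => hii (hgetinj _ _ h).symm)
          calc D.get i * U i' j' = D.get i * (D.get i' * U i' j') := by rw [hUl]
            _ = D.get i * D.get i' * U i' j' := by rw [← mul_assoc]
            _ = 0 := by rw [hgi, zmul]
    have claimB : ∀ i, π i = none → D.get i * listSup L = 0 := by
      intro i hπ
      rw [mul_listSup pwL]
      apply listSup_zero
      intro x hx
      obtain ⟨y, hy, rfl⟩ := List.mem_map.1 hx
      obtain ⟨i', j', hπ', rfl⟩ := hmemL y hy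
      by_cases hii : i' = i
      · subst hii; rw [hπ] at hπ'; exact absurd hπ' (by simp)
      · have hgi : D.get i * D.get i' = 0 :=
          atoms_orth (hatom_i i) (hatom_i i') (fun h => hii (hgetinj _ _ h).symm)
        calc D.get i * U i' j' = D.get i * (D.get i' * U i' j') := by rw [hUl]
          _ = D.get i * D.get i' * U i' j' := by rw [← mul_assoc]
          _ = 0 := by rw [hgi, zmul]
    apply PEquiv.ext
    intro i
    rw [hΦapp]
    cases hπi : π i with
    | none =>
      apply (Fnone (listSup L) i).2
      rw [← conj_as_rr (hatom_i i).1, claimB i hπi, zinv, zmul]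
    | some j =>
      apply (Fspec hnd (listSup L) i j).2
      rw [← conj_as_rr (hatom_i i).1, claimA i j hπi]
      exact hUd i j
  -- multiplicativity
  have hmul : ∀ a b : S, Φ (a * b) = (Φ a).trans (Φ b) := by
    intro a b
    apply PEquiv.ext
    intro i
    have htr : ((Φ a).trans (Φ b)) i = (F D a i).bind (F D b) := rfl
    rw [hΦapp, htr]
    cases hai : F D a i with
    | none =>
      have ha0 : a⁻¹ * D.get i * a = 0 := (Fnone a i).1 hai
      have : F D (a * b) i = none := by
        rw [Fnone]
        rw [conj_exp, ha0, mulz, zmul]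
      rw [this]; rfl
    | some j =>
      have haj : a⁻¹ * D.get i * a = D.get j := (Fspec hnd a i j).1 hai
      show F D (a * b) i = F D b j
      cases hbj : F D b j with
      | none =>
        have hb0 : b⁻¹ * D.get j * b = 0 := (Fnone b j).1 hbj
        rw [Fnone]
        rw [conj_exp, haj]
        exact hb0
      | some k =>
        have hbk : b⁻¹ * D.get j * b = D.get k := (Fspec hnd b j k).1 hbj
        rw [Fspec hnd]
        rw [conj_exp, haj]
        exact hbk
  exact ⟨D.length, Equiv.ofBijective Φ ⟨hinj, hsurj⟩, hmul⟩

end Main8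


namespace Glue9
open IMS Order2 Order3 Sup4 Atom5 Ideal6 Main7 Main8

theorem statement5_aux (S : Type u) [BooleanInverseMeetMonoid S]
    (hf : Fundamental S) (h0 : ZeroSimplifying S) :
    IdemAtomless S ∨
      ∃ (n : ℕ) (φ : S ≃ PEquiv (Fin n) (Fin n)),
        ∀ a b : S, φ (a * b) = (φ a).trans (φ b) := by
  classical
  by_cases hA : IdemAtomless S
  · exact Or.inl hA
  right
  unfold IdemAtomless at hA
  push_neg at hA
  obtain ⟨e, he, he0, hmin⟩ := hA
  have hatom_e : IsAtomE e := by
    refine ⟨he, he0, ?_⟩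
    intro f hfm hle
    by_cases h0' : f = 0
    · exact Or.inl h0'
    · exact Or.inr (hmin f hfm h0' hle)
  rcases h0 (idealSet e) (idealSet_videal e) with h1 | h2
  · exfalso
    have hmem := idem_mem_idealSet he
    rw [h1] at hmem
    exact he0 hmem
  · have h1 : (1 : S) ∈ idealSet e := by rw [h2]; trivial
    obtain ⟨l, hl, hd⟩ := h1
    set M := l.map (fun x => x⁻¹ * x) with hM
    have hMidem : ∀ z ∈ M, z * z = z := map_rr_idem l
    have h1inv : (1 : S)⁻¹ * 1 = 1 := by rw [idem_inv (one_mul 1), one_mul]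
    rw [h1inv] at hd
    have hone : listSup M = 1 := nle_antisymm
      (listSup_le (pairwise_compat_idem hMidem) (fun x hx => idem_nle_one (hMidem x hx))) hd
    set D := (M.filter (fun z => decide (z ≠ 0))).dedup with hD
    have hDnodup : D.Nodup := List.nodup_dedup _
    have hmemD : ∀ z ∈ D, z ∈ M ∧ z ≠ 0 := by
      intro z hz
      rw [hD, List.mem_dedup, List.mem_filter] at hz
      exact ⟨hz.1, by simpa using hz.2⟩
    have hatomD : ∀ z ∈ D, IsAtomE z ∧ ∃ x : S, x⁻¹ * x = z ∧ x * x⁻¹ = e := by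
      intro z hz
      obtain ⟨hzM, hz0⟩ := hmemD z hz
      obtain ⟨x, hxl, hxz⟩ := List.mem_map.1 hzM
      have hrx : nle (x * x⁻¹) e := hl x hxl
      have hxx : x * x⁻¹ = e := by
        rcases hatom_e.2.2 _ (dd_idem x) hrx with h | h
        · exfalso
          apply hz0
          rw [← hxz, eq_zero_of_dd h, zinv, zmul]
        · exact h
      have hzconj : x⁻¹ * e * x = z := by
        rw [← hxx, ← hxz, imi' x]
      constructor
      · rcases atom_conj hatom_e x with h | h
        · rw [hzconj] at h; exact absurd h hz0
        · rw [hzconj] at h; exact h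
      · exact ⟨x, hxz, hxx⟩
    have hDidem : ∀ z ∈ D, z * z = z := fun z hz => (hatomD z hz).1.1
    have hDsup : listSup D = (1 : S) := by
      have pwM := pairwise_compat_idem hMidem
      have pwD := pairwise_compat_idem hDidem
      apply nle_antisymm
      · exact listSup_le pwD (fun x hx => idem_nle_one (hDidem x hx))
      · rw [← hone]
        apply listSup_nle_listSup pwM pwD
        intro x hx
        by_cases h0' : x = 0
        · exact Or.inl h0'
        · right
          rw [hD, List.mem_dedup, List.mem_filter]
          exact ⟨hx, by simpa⟩
    have hDtrans : ∀ d ∈ D, ∀ d' ∈ D, ∃ u : S, u⁻¹ * u = d ∧ u * u⁻¹ = d' := by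
      intro d hd d' hd'
      obtain ⟨x, hx1, hx2⟩ := (hatomD d hd).2
      obtain ⟨x', hx1', hx2'⟩ := (hatomD d' hd').2
      refine ⟨x'⁻¹ * x, ?_, ?_⟩
      · calc (x'⁻¹ * x)⁻¹ * (x'⁻¹ * x)
              = x⁻¹ * (x' * x'⁻¹) * x := by rw [mul_inv_rev', inv_inv']; simp only [mul_assoc]
          _ = x⁻¹ * (x * x⁻¹) * x := by rw [hx2', ← hx2]
          _ = x⁻¹ * x := by rw [imi' x]
          _ = d := hx1
      · calc (x'⁻¹ * x) * (x'⁻¹ * x)⁻¹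
              = x'⁻¹ * (x * x⁻¹) * x' := by rw [mul_inv_rev', inv_inv']; simp only [mul_assoc]
          _ = x'⁻¹ * (x' * x'⁻¹) * x' := by rw [hx2, ← hx2']
          _ = x'⁻¹ * x' := by rw [imi' x']
          _ = d' := hx1'
    exact main_atom hf D hDnodup (fun d hd => (hatomD d hd).1) hDsup hDtrans

end Glue9

/-- A fundamental, 0-simplifying, countable Boolean inverse
∧-monoid is either a Tarski monoid (its Boolean algebra of idempotents is
atomless) or isomorphic to a finite symmetric inverse monoid, i.e. the inverse
monoid of all partial bijections of `{1, …, n}` under composition. -/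
theorem statement5 (S : Type u) [BooleanInverseMeetMonoid S] [Countable S]
    (hf : Fundamental S) (h0 : ZeroSimplifying S) :
    IdemAtomless S ∨
      ∃ (n : ℕ) (φ : S ≃ PEquiv (Fin n) (Fin n)),
        ∀ a b : S, φ (a * b) = (φ a).trans (φ b) :=
  Glue9.statement5_aux S hf h0
end

section
/- Let S be a Boolean inverse ∧-monoid. (1) If s ∈ S satisfies s⁻¹s = ss⁻¹ = e, then g = s ∨ ē is a unit of S, where ē is the complement of e in the Boolean algebra E(S). (2) For a ∈ S, a² = 0 if, and only if, a⁻¹a ⊥ aa⁻¹, if and only if a ⊥ a⁻¹. (3) If a² = 0 and a ≠ 0, and e is the complement of a⁻¹a ∨ aa⁻¹ in E(S), then u = a⁻¹ ∨ a ∨ e is a non-trivial involution (u² = 1, u ≠ 1) with a ≤ u. -/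
universe u

namespace S6


variable {S : Type u} [InverseMonoidWithZero S]

lemma mim (a : S) : a * a⁻¹ * a = a := InverseMonoidWithZero.mul_inv_mul a
lemma imi (a : S) : a⁻¹ * a * a⁻¹ = a⁻¹ := InverseMonoidWithZero.inv_mul_inv a
lemma zmul (a : S) : (0:S) * a = 0 := InverseMonoidWithZero.zero_mul' a
lemma mulz (a : S) : a * (0:S) = 0 := InverseMonoidWithZero.mul_zero' a
lemma invu {a b : S} (h1 : a*b*a = a) (h2 : b*a*b = b) : b = a⁻¹ :=
  InverseMonoidWithZero.inv_unique a b h1 h2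

lemma inv_invo (a : S) : a⁻¹⁻¹ = a := (invu (imi a) (mim a)).symm

lemma idem_inv {e : S} (he : e * e = e) : e⁻¹ = e :=
  (invu (by rw [he, he]) (by rw [he, he])).symm

lemma d_idem (a : S) : (a⁻¹ * a) * (a⁻¹ * a) = a⁻¹ * a := by
  rw [← mul_assoc, imi]

lemma r_idem (a : S) : (a * a⁻¹) * (a * a⁻¹) = a * a⁻¹ := by
  rw [← mul_assoc, mim]

lemma pe {e : S} (he : e*e = e) : ∀ x : S, e*(e*x) = e*x := fun x => by
  rw [← mul_assoc, he]

lemma pm (a : S) : ∀ x : S, a*(a⁻¹*(a*x)) = a*x := fun x => by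
  simpa only [mul_assoc] using congrArg (· * x) (mim a)

lemma pi' (a : S) : ∀ x : S, a⁻¹*(a*(a⁻¹*x)) = a⁻¹*x := fun x => by
  simpa only [mul_assoc] using congrArg (· * x) (imi a)

lemma pcomm {e f : S} (h : e*f = f*e) : ∀ x : S, e*(f*x) = f*(e*x) := fun x => by
  rw [← mul_assoc, h, mul_assoc]

lemma zero_inv : (0:S)⁻¹ = 0 := (invu (by simp only [mulz]) (by simp only [mulz])).symm

lemma idem_mul_idem {e f : S} (he : e*e=e) (hf : f*f=f) : (e*f)*(e*f) = e*f := by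
  have imix : ∀ x : S, (e*f)⁻¹*(e*(f*((e*f)⁻¹*x))) = (e*f)⁻¹*x := fun x => by
    simpa only [mul_assoc] using congrArg (· * x) (imi (e*f))
  have h1 : (e*f) * ((f*(e*f)⁻¹)*e) * (e*f) = e*f := by
    have h := mim (e*f)
    simp only [mul_assoc] at h ⊢
    rw [pe hf, pe he]
    exact h
  have h2 : ((f*(e*f)⁻¹)*e) * (e*f) * ((f*(e*f)⁻¹)*e) = (f*(e*f)⁻¹)*e := by
    simp only [mul_assoc]
    rw [pe he, pe hf, imix]
  have hfe : (f*(e*f)⁻¹)*e = (e*f)⁻¹ := invu h1 h2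
  have hx2 : (e*f)⁻¹ * (e*f)⁻¹ = (e*f)⁻¹ := by
    conv_lhs => rw [← hfe]
    simp only [mul_assoc]
    rw [imix, ← mul_assoc, hfe]
  have hflip : e*f = (e*f)⁻¹ := ((idem_inv hx2).symm.trans (inv_invo (e*f))).symm
  calc (e*f)*(e*f) = (e*f)⁻¹*(e*f)⁻¹ := by rw [← hflip]
    _ = (e*f)⁻¹ := hx2
    _ = e*f := hflip.symm

lemma idem_comm {e f : S} (he : e*e=e) (hf : f*f=f) : e*f = f*e := by
  have hef := idem_mul_idem he hf
  have hfe := idem_mul_idem hf he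
  have h1 : (e*f)*(f*e)*(e*f) = e*f := by
    simp only [mul_assoc] at hef ⊢
    rw [pe hf, pe he]
    exact hef
  have h2 : (f*e)*(e*f)*(f*e) = f*e := by
    simp only [mul_assoc] at hfe ⊢
    rw [pe he, pe hf]
    exact hfe
  have h := invu h1 h2
  rw [h, idem_inv hef]

lemma mul_inv_revo (a b : S) : (a*b)⁻¹ = b⁻¹ * a⁻¹ := by
  have hbb : b*(b⁻¹*b) = b := by rw [← mul_assoc, mim]
  have haa : a⁻¹*(a*a⁻¹) = a⁻¹ := by rw [← mul_assoc, imi]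
  have h1 : (a*b)*(b⁻¹*a⁻¹)*(a*b) = a*b := by
    calc (a*b)*(b⁻¹*a⁻¹)*(a*b) = a*((b*b⁻¹)*((a⁻¹*a)*b)) := by simp only [mul_assoc]
      _ = a*((a⁻¹*a)*((b*b⁻¹)*b)) := by rw [pcomm (idem_comm (r_idem b) (d_idem a))]
      _ = a*b := by simp only [mul_assoc]; rw [pm a, hbb]
  have h2 : (b⁻¹*a⁻¹)*(a*b)*(b⁻¹*a⁻¹) = b⁻¹*a⁻¹ := by
    calc (b⁻¹*a⁻¹)*(a*b)*(b⁻¹*a⁻¹) = b⁻¹*((a⁻¹*a)*((b*b⁻¹)*a⁻¹)) := by simp only [mul_assoc]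
      _ = b⁻¹*((b*b⁻¹)*((a⁻¹*a)*a⁻¹)) := by rw [pcomm (idem_comm (d_idem a) (r_idem b))]
      _ = b⁻¹*a⁻¹ := by simp only [mul_assoc]; rw [pi' b, haa]
  exact (invu h1 h2).symm



lemma nle_refl (a : S) : nle a a := ⟨1, one_mul 1, (one_mul a).symm⟩
lemma zero_nle (a : S) : nle 0 a := ⟨0, zmul 0, (zmul a).symm⟩
lemma nle_zero {a : S} (h : nle a 0) : a = 0 := by
  obtain ⟨e, _, h⟩ := h; rw [h, mulz]

lemma nle_r {a b : S} (h : nle a b) : a = (a*a⁻¹)*b := by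
  obtain ⟨e, he, rfl⟩ := h
  rw [mul_inv_revo, idem_inv he]
  have : (e*b)*(b⁻¹*e)*b = e*b := by
    simp only [mul_assoc]
    rw [← mul_assoc b b⁻¹, pcomm (idem_comm (r_idem b) he), pe he, mim]
  exact this.symm

lemma nle_of_r {a b : S} (h : a = (a*a⁻¹)*b) : nle a b := ⟨a*a⁻¹, r_idem a, h⟩

lemma nle_d {a b : S} (h : nle a b) : a = b*(a⁻¹*a) := by
  obtain ⟨e, he, rfl⟩ := h
  rw [mul_inv_revo, idem_inv he]
  have : b*((b⁻¹*e)*(e*b)) = e*b := by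
    simp only [mul_assoc]
    rw [pe he, ← mul_assoc b b⁻¹, pcomm (idem_comm (r_idem b) he), mim]
  exact this.symm

lemma nle_of_f {a b f : S} (hf : f*f = f) (h : a = b*f) : nle a b := by
  subst h
  apply nle_of_r
  rw [mul_inv_revo, idem_inv hf]
  have : ((b*f)*(f*b⁻¹))*b = b*f := by
    simp only [mul_assoc]
    rw [pe hf, idem_comm hf (d_idem b), ← mul_assoc, ← mul_assoc, mim]
  exact this.symm

lemma nle_trans {a b c : S} (h1 : nle a b) (h2 : nle b c) : nle a c := by
  obtain ⟨e, he, rfl⟩ := h1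
  obtain ⟨f, hf, rfl⟩ := h2
  exact ⟨e*f, idem_mul_idem he hf, (mul_assoc e f c).symm⟩

lemma nle_antisymm {a b : S} (h1 : nle a b) (h2 : nle b a) : a = b := by
  obtain ⟨e, he, rfl⟩ := h1
  obtain ⟨f, hf, hb⟩ := h2
  calc e*b = e*(f*(e*b)) := by rw [← hb]
    _ = f*(e*(e*b)) := pcomm (idem_comm he hf) _
    _ = f*(e*b) := by rw [pe he]
    _ = b := hb.symm

lemma nle_mul_right {a b : S} (c : S) (h : nle a b) : nle (a*c) (b*c) := by
  obtain ⟨e, he, rfl⟩ := h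
  exact ⟨e, he, mul_assoc e b c⟩

lemma nle_mul_left {a b : S} (c : S) (h : nle a b) : nle (c*a) (c*b) := by
  have hd := nle_d h
  exact nle_of_f (d_idem a) (by rw [mul_assoc, ← hd])

lemma nle_inv {a b : S} (h : nle a b) : nle a⁻¹ b⁻¹ := by
  obtain ⟨e, he, rfl⟩ := h
  exact nle_of_f he (by rw [mul_inv_revo, idem_inv he])

lemma nle_one_iff {a : S} : nle a 1 ↔ a*a = a := by
  constructor
  · rintro ⟨e, he, rfl⟩
    simpa only [mul_one] using he
  · intro h; exact ⟨a, h, (mul_one a).symm⟩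

lemma orth_compat {a b : S} (h : Orth a b) : Compat a b :=
  ⟨by rw [h.1, zmul], by rw [h.2, zmul]⟩

lemma compat_symm {a b : S} (h : Compat a b) : Compat b a := by
  have t1 := mul_inv_revo a b⁻¹; rw [inv_invo] at t1
  have t2 := mul_inv_revo a⁻¹ b; rw [inv_invo] at t2
  constructor
  · rw [show b*a⁻¹ = a*b⁻¹ from by rw [← t1, idem_inv h.1]]; exact h.1
  · rw [show b⁻¹*a = a⁻¹*b from by rw [← t2, idem_inv h.2]]; exact h.2

lemma orth_symm {a b : S} (h : Orth a b) : Orth b a := by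
  have t1 := mul_inv_revo a b⁻¹; rw [inv_invo] at t1
  have t2 := mul_inv_revo a⁻¹ b; rw [inv_invo] at t2
  exact ⟨by rw [← t1, h.1, zero_inv], by rw [← t2, h.2, zero_inv]⟩

lemma compat_idem {e f : S} (he : e*e=e) (hf : f*f=f) : Compat e f := by
  constructor
  · rw [idem_inv hf]; exact idem_mul_idem he hf
  · rw [idem_inv he]; exact idem_mul_idem he hf

lemma compat_inv {a b : S} (h : Compat a b) : Compat a⁻¹ b⁻¹ := by
  constructor
  · rw [inv_invo]; exact h.2
  · rw [inv_invo]; exact h.1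


section Distrib
variable {S : Type u} [DistributiveInverseMonoid S]

lemma le_bsup_l {a b : S} (h : Compat a b) : nle a (bsup a b) :=
  DistributiveInverseMonoid.le_sup_left a b h
lemma le_bsup_r {a b : S} (h : Compat a b) : nle b (bsup a b) :=
  DistributiveInverseMonoid.le_sup_right a b h
lemma bsup_le {a b c : S} (h : Compat a b) (h1 : nle a c) (h2 : nle b c) : nle (bsup a b) c :=
  DistributiveInverseMonoid.sup_le a b c h h1 h2
lemma mul_bsup {a b : S} (c : S) (h : Compat a b) : c * bsup a b = bsup (c*a) (c*b) :=
  DistributiveInverseMonoid.mul_sup a b c h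
lemma bsup_mul {a b : S} (c : S) (h : Compat a b) : bsup a b * c = bsup (a*c) (b*c) :=
  DistributiveInverseMonoid.sup_mul a b c h

lemma compat_zero (a : S) : Compat a (0:S) := by
  constructor
  · rw [zero_inv, mulz, mulz]
  · rw [mulz, mulz]
lemma zero_compat (a : S) : Compat (0:S) a := compat_symm (compat_zero a)
lemma bsup_zero (a : S) : bsup a 0 = a :=
  nle_antisymm (bsup_le (compat_zero a) (nle_refl a) (zero_nle a)) (le_bsup_l (compat_zero a))
lemma zero_bsup (a : S) : bsup 0 a = a :=
  nle_antisymm (bsup_le (zero_compat a) (zero_nle a) (nle_refl a)) (le_bsup_r (zero_compat a))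
lemma bsup_inv {a b : S} (h : Compat a b) : (bsup a b)⁻¹ = bsup a⁻¹ b⁻¹ := by
  have hc := compat_inv h
  apply nle_antisymm
  · have h1 : nle a (bsup a⁻¹ b⁻¹)⁻¹ := by
      have := nle_inv (le_bsup_l hc)
      rwa [inv_invo] at this
    have h2 : nle b (bsup a⁻¹ b⁻¹)⁻¹ := by
      have := nle_inv (le_bsup_r hc)
      rwa [inv_invo] at this
    have := nle_inv (bsup_le h h1 h2)
    rwa [inv_invo] at this
  · exact bsup_le hc (nle_inv (le_bsup_l h)) (nle_inv (le_bsup_r h))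
lemma bsup_idem {e f : S} (he : e*e=e) (hf : f*f=f) : bsup e f * bsup e f = bsup e f :=
  nle_one_iff.1 (bsup_le (compat_idem he hf) (nle_one_iff.2 he) (nle_one_iff.2 hf))

end Distrib

section Bool
variable {S : Type u} [BooleanInverseMonoid S]

lemma bcompl_idem {e : S} (he : e*e = e) : bcompl e * bcompl e = bcompl e :=
  BooleanInverseMonoid.compl_idem e he
lemma mul_bcompl {e : S} (he : e*e = e) : e * bcompl e = 0 :=
  BooleanInverseMonoid.mul_compl e he
lemma bcompl_mul {e : S} (he : e*e = e) : bcompl e * e = 0 := by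
  rw [← idem_comm he (bcompl_idem he)]
  exact mul_bcompl he
lemma bsup_bcompl {e : S} (he : e*e = e) : bsup e (bcompl e) = 1 :=
  BooleanInverseMonoid.sup_compl e he
lemma nle_mul_bcompl {d f : S} (hf : f*f = f) (h : nle d f) : d * bcompl f = 0 := by
  obtain ⟨g, hg, rfl⟩ := h
  rw [mul_assoc, mul_bcompl hf, mulz]

end Bool

end S6

/-- In a Boolean inverse ∧-monoid:
(1) if `s⁻¹s = ss⁻¹ = e` then `s ∨ ē` is a unit;
(2) `a² = 0` iff `a⁻¹a ⊥ aa⁻¹` iff `a ⊥ a⁻¹`;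
(3) if `a² = 0` and `a ≠ 0`, and `e` is the complement of `a⁻¹a ∨ aa⁻¹`, then
`u = a⁻¹ ∨ a ∨ e` is a non-trivial involution lying above `a`. -/
theorem statement6 (S : Type u) [BooleanInverseMeetMonoid S] :
    (∀ s e : S, s⁻¹ * s = e → s * s⁻¹ = e → IsUnit (bsup s (bcompl e))) ∧
    (∀ a : S, (a * a = 0 ↔ Orth (a⁻¹ * a) (a * a⁻¹)) ∧
      (a * a = 0 ↔ Orth a a⁻¹)) ∧
    (∀ a e : S, a * a = 0 → a ≠ 0 → e = bcompl (bsup (a⁻¹ * a) (a * a⁻¹)) →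
      bsup (bsup a⁻¹ a) e * bsup (bsup a⁻¹ a) e = 1 ∧
      bsup (bsup a⁻¹ a) e ≠ 1 ∧ nle a (bsup (bsup a⁻¹ a) e)) := by
  refine ⟨?_, ?_, ?_⟩
  · -- Part 1
    intro s e h1 h2
    have he : e*e = e := by rw [← h1]; exact S6.d_idem s
    have hE := S6.bcompl_idem he
    have hsd : s*e = s := by rw [← h1, ← mul_assoc, S6.mim]
    have hds : e*s = s := by rw [← h2, S6.mim]
    have hid : e*s⁻¹ = s⁻¹ := by rw [← h1, S6.imi]
    have hdi : s⁻¹*e = s⁻¹ := by rw [← h2, ← mul_assoc, S6.imi]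
    have hsc : s * bcompl e = 0 := by
      rw [← hsd, mul_assoc, S6.mul_bcompl he, S6.mulz]
    have hsc' : s⁻¹ * bcompl e = 0 := by
      rw [← hdi, mul_assoc, S6.mul_bcompl he, S6.mulz]
    have hcs : bcompl e * s = 0 := by
      rw [← hds, ← mul_assoc, S6.bcompl_mul he, S6.zmul]
    have hcs' : bcompl e * s⁻¹ = 0 := by
      rw [← hid, ← mul_assoc, S6.bcompl_mul he, S6.zmul]
    have C1 : Compat s (bcompl e) :=
      S6.orth_compat ⟨by rw [S6.idem_inv hE]; exact hsc, hsc'⟩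
    have C2 : Compat s⁻¹ (bcompl e) :=
      S6.orth_compat ⟨by rw [S6.idem_inv hE]; exact hsc', by rw [S6.inv_invo]; exact hsc⟩
    have hg1 : bsup s (bcompl e) * bsup s⁻¹ (bcompl e) = 1 := by
      rw [S6.bsup_mul _ C1, S6.mul_bsup _ C2, S6.mul_bsup _ C2, h2, hsc, hcs', hE,
        S6.bsup_zero, S6.zero_bsup, S6.bsup_bcompl he]
    have hg2 : bsup s⁻¹ (bcompl e) * bsup s (bcompl e) = 1 := by
      rw [S6.bsup_mul _ C2, S6.mul_bsup _ C1, S6.mul_bsup _ C1, h1, hsc', hcs, hE,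
        S6.bsup_zero, S6.zero_bsup, S6.bsup_bcompl he]
    exact ⟨⟨_, _, hg1, hg2⟩, rfl⟩
  · -- Part 2
    intro a
    have hdr : a*a = 0 → (a⁻¹*a)*(a*a⁻¹) = 0 := fun h => by
      rw [mul_assoc, ← mul_assoc a a a⁻¹, h, S6.zmul, S6.mulz]
    have key : (a⁻¹*a)*(a*a⁻¹) = 0 → a*a = 0 := fun h => by
      have haux : a*((a⁻¹*a)*(a*a⁻¹))*a = a*a := by
        simp only [mul_assoc]
        rw [S6.pm a, show a*(a⁻¹*a) = a from by rw [← mul_assoc, S6.mim]]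
      rw [← haux, h, S6.mulz, S6.zmul]
    constructor
    · constructor
      · intro h
        constructor
        · rw [S6.mul_inv_revo, S6.inv_invo]; exact hdr h
        · rw [S6.mul_inv_revo, S6.inv_invo]; exact hdr h
      · intro h
        have h1 := h.1
        rw [S6.mul_inv_revo, S6.inv_invo] at h1
        exact key h1
    · constructor
      · intro h
        exact ⟨by rw [S6.inv_invo]; exact h, by rw [← S6.mul_inv_revo, h, S6.zero_inv]⟩
      · intro h
        have := h.1
        rwa [S6.inv_invo] at this
  · -- Part 3
    intro a e h0 hne he
    subst he
    have haa : a⁻¹*a⁻¹ = 0 := by rw [← S6.mul_inv_revo, h0, S6.zero_inv]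
    have hd := S6.d_idem a
    have hr := S6.r_idem a
    have Cia : Compat a⁻¹ a := S6.orth_compat ⟨haa, by rw [S6.inv_invo]; exact h0⟩
    have Cai : Compat a a⁻¹ := S6.compat_symm Cia
    have Cdr : Compat (a⁻¹*a) (a*a⁻¹) := S6.compat_idem hd hr
    set f := bsup (a⁻¹*a) (a*a⁻¹) with hf
    have hfI : f*f = f := S6.bsup_idem hd hr
    have hE := S6.bcompl_idem hfI
    have hrE : (a*a⁻¹) * bcompl f = 0 := S6.nle_mul_bcompl hfI (S6.le_bsup_r Cdr)
    have hdE : (a⁻¹*a) * bcompl f = 0 := S6.nle_mul_bcompl hfI (S6.le_bsup_l Cdr)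
    have hEr : bcompl f * (a*a⁻¹) = 0 := by rw [← S6.idem_comm hr hE]; exact hrE
    have hEd : bcompl f * (a⁻¹*a) = 0 := by rw [← S6.idem_comm hd hE]; exact hdE
    have hadE : a * bcompl f = 0 := by
      have ha : a*(a⁻¹*a) = a := by rw [← mul_assoc, S6.mim]
      rw [← ha, mul_assoc, hdE, S6.mulz]
    have hiE : a⁻¹ * bcompl f = 0 := by
      have hi : a⁻¹*(a*a⁻¹) = a⁻¹ := by rw [← mul_assoc, S6.imi]
      rw [← hi, mul_assoc, hrE, S6.mulz]
    have hEa : bcompl f * a = 0 := by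
      rw [← S6.mim a, ← mul_assoc, hEr, S6.zmul]
    have hEi : bcompl f * a⁻¹ = 0 := by
      rw [← S6.imi a, ← mul_assoc, hEd, S6.zmul]
    have hbE : bsup a⁻¹ a * bcompl f = 0 := by
      rw [S6.bsup_mul _ Cia, hiE, hadE, S6.bsup_zero]
    have hEb : bcompl f * bsup a⁻¹ a = 0 := by
      rw [S6.mul_bsup _ Cia, hEi, hEa, S6.bsup_zero]
    have hbi : (bsup a⁻¹ a)⁻¹ * bcompl f = 0 := by
      rw [S6.bsup_inv Cia, S6.inv_invo, S6.bsup_mul _ Cai, hadE, hiE, S6.bsup_zero]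
    have CbE : Compat (bsup a⁻¹ a) (bcompl f) :=
      S6.orth_compat ⟨by rw [S6.idem_inv hE]; exact hbE, hbi⟩
    have hbb : bsup a⁻¹ a * bsup a⁻¹ a = f := by
      rw [S6.bsup_mul _ Cia, S6.mul_bsup _ Cia, S6.mul_bsup _ Cia, haa, h0,
        S6.zero_bsup, S6.bsup_zero, hf]
    have hu2 : bsup (bsup a⁻¹ a) (bcompl f) * bsup (bsup a⁻¹ a) (bcompl f) = 1 := by
      rw [S6.bsup_mul _ CbE, S6.mul_bsup _ CbE, S6.mul_bsup _ CbE, hbb, hbE, hEb, hE,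
        S6.bsup_zero, S6.zero_bsup, S6.bsup_bcompl hfI]
    have hau : nle a (bsup (bsup a⁻¹ a) (bcompl f)) :=
      S6.nle_trans (S6.le_bsup_r Cia) (S6.le_bsup_l CbE)
    refine ⟨hu2, ?_, hau⟩
    intro h1
    apply hne
    have hone := S6.nle_one_iff.1 (h1 ▸ hau)
    rw [h0] at hone
    exact hone.symm
end
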